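/- arXiv:2002.02766 — 3 statements merged into one kernel-verified Lean document; each statement's English description precedes it below -/
import Mathlib

section
/- Uniqueness for the ε-Milne problem with geometric correction (uniqueness part of Theorem 'Milne theorem 1'): There exists ε₀ ∈ (0,1), depending only on R₁, R₂ and n, such that for every ε ∈ (0, ε₀], the only classical solution of the ε-Milne problem with geometric correction with in-flow data h ≡ 0 and source S ≡ 0 is the zero function f ≡ 0 on D. -/
noncomputable section

open Real Set MeasureTheory Filter Topology

namespace MilneStmt

/-- The boundary-layer thickness `L = ε^(-n)`. -/
def layerL (ε n : ℝ) : ℝ := ε ^ (-n)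

/-- The geometric force `F(η,ψ)`. -/
def force (R₁ R₂ ε η ψ : ℝ) : ℝ :=
  -ε * (Real.sin ψ ^ 2 / (R₁ - ε * η) + Real.cos ψ ^ 2 / (R₂ - ε * η))

/-- The domain `D = [0,L] × [-π/2, π/2] × [-π, π]` of the variables `(η, φ, ψ)`. -/
def milneDomain (L : ℝ) : Set (ℝ × ℝ × ℝ) :=
  Icc (0 : ℝ) L ×ˢ Icc (-(π / 2)) (π / 2) ×ˢ Icc (-π) π

/-- The in-flow set `{(φ,ψ) : sin φ > 0, ψ ∈ [-π,π]}` (with `φ` in the velocity range). -/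
def inflowSet : Set (ℝ × ℝ) :=
  {q | 0 < Real.sin q.1 ∧ q.1 ∈ Icc (-(π / 2)) (π / 2) ∧ q.2 ∈ Icc (-π) π}

/-- The angular average `f̄(η)`. -/
def angAvg (f : ℝ × ℝ × ℝ → ℝ) (η : ℝ) : ℝ :=
  (1 / (4 * π)) * ∫ ψ in (-π)..π, ∫ φ in (-(π / 2))..(π / 2), f (η, φ, ψ) * Real.cos φ

/-- Partial derivative in `η`. -/
def dEta (g : ℝ × ℝ × ℝ → ℝ) (p : ℝ × ℝ × ℝ) : ℝ :=
  deriv (fun t => g (t, p.2.1, p.2.2)) p.1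

/-- Partial derivative in `φ`. -/
def dPhi (g : ℝ × ℝ × ℝ → ℝ) (p : ℝ × ℝ × ℝ) : ℝ :=
  deriv (fun t => g (p.1, t, p.2.2)) p.2.1

/-- Partial derivative in `ψ`. -/
def dPsi (g : ℝ × ℝ × ℝ → ℝ) (p : ℝ × ℝ × ℝ) : ℝ :=
  deriv (fun t => g (p.1, p.2.1, t)) p.2.2

/-- A classical solution of the ε-Milne problem with geometric correction,
with in-flow data `h` and source `S`. -/
structure IsMilneSolution (R₁ R₂ ε n : ℝ) (h : ℝ → ℝ → ℝ) (S : ℝ × ℝ × ℝ → ℝ)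
    (f : ℝ × ℝ × ℝ → ℝ) : Prop where
  smooth : ContDiffOn ℝ 1 f (milneDomain (layerL ε n))
  eqn : ∀ p ∈ interior (milneDomain (layerL ε n)),
    Real.sin p.2.1 * dEta f p + force R₁ R₂ ε p.1 p.2.2 * Real.cos p.2.1 * dPhi f p
      + f p - angAvg f p.1 = S p
  inflow : ∀ q ∈ inflowSet, f (0, q.1, q.2) = h q.1 q.2
  reflect : ∀ φ ψ : ℝ, f (layerL ε n, φ, ψ) = f (layerL ε n, -φ, ψ)

/-- The weighted `L²` norm on `D`. -/
def l2Norm (L : ℝ) (g : ℝ × ℝ × ℝ → ℝ) : ℝ :=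
  Real.sqrt (∫ η in (0 : ℝ)..L, ∫ ψ in (-π)..π, ∫ φ in (-(π / 2))..(π / 2),
    g (η, φ, ψ) ^ 2 * Real.cos φ)

/-- The `L^∞` norm (sup over `D`). -/
def linfNorm (L : ℝ) (g : ℝ × ℝ × ℝ → ℝ) : ℝ :=
  ⨆ p ∈ milneDomain L, |g p|

/-- The `L^∞` norm over the in-flow boundary. -/
def inflowLinf (g : ℝ → ℝ → ℝ) : ℝ :=
  ⨆ q ∈ inflowSet, |g q.1 q.2|

/-- The limit value `f_L = (3/(4π)) ∫∫ f(L,φ,ψ) sin²φ cos φ dφ dψ`. -/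
def limitValue (L : ℝ) (f : ℝ × ℝ × ℝ → ℝ) : ℝ :=
  (3 / (4 * π)) * ∫ ψ in (-π)..π, ∫ φ in (-(π / 2))..(π / 2),
    f (L, φ, ψ) * Real.sin φ ^ 2 * Real.cos φ

/-- The data bounds with constants `K` and `M` for in-flow data `h` and source `S`. -/
structure DataBounds (K M L : ℝ) (h : ℝ → ℝ → ℝ) (S : ℝ × ℝ × ℝ → ℝ) : Prop where
  hSmooth : ContDiffOn ℝ 1 (fun q : ℝ × ℝ => h q.1 q.2) inflowSet
  hBound : ∀ q ∈ inflowSet,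
    |h q.1 q.2| + |deriv (fun t => h t q.2) q.1| + |deriv (fun t => h q.1 t) q.2| ≤ M
  sSmooth : ContDiffOn ℝ 1 S (milneDomain L)
  sBound : ∀ p ∈ milneDomain L,
    Real.exp (K * p.1) * (|S p| + |dEta S p| + |dPhi S p| + |dPsi S p|) ≤ M

lemma integral_pos_aux {k : ℝ → ℝ} (hk : Continuous k) {a b x₀ : ℝ}
    (hnn : ∀ x ∈ Icc a b, 0 ≤ k x) (hx : x₀ ∈ Ioo a b) (hpos : 0 < k x₀) :
    0 < ∫ x in a..b, k x := by
  have h1 : Ioo a b ∩ k ⁻¹' (Ioi (k x₀ / 2)) ∈ 𝓝 x₀ :=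
    Filter.inter_mem (Ioo_mem_nhds hx.1 hx.2)
      (hk.continuousAt.preimage_mem_nhds (Ioi_mem_nhds (by linarith)))
  obtain ⟨δ, hδpos, hδ⟩ := Metric.mem_nhds_iff.1 h1
  set u := x₀ - δ/2 with hu
  set v := x₀ + δ/2 with hv
  have hball : Icc u v ⊆ Ioo a b ∩ k ⁻¹' (Ioi (k x₀ / 2)) := by
    intro x hxx
    apply hδ
    rw [Real.ball_eq_Ioo]
    exact ⟨by simp only [hu] at hxx; linarith [hxx.1], by simp only [hv] at hxx; linarith [hxx.2]⟩
  have huv : u < v := by simp only [hu, hv]; linarith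
  have humem : u ∈ Ioo a b := (hball ⟨le_rfl, huv.le⟩).1
  have hvmem : v ∈ Ioo a b := (hball ⟨huv.le, le_rfl⟩).1
  have hInt : ∀ c d : ℝ, IntervalIntegrable k volume c d := fun c d => hk.intervalIntegrable c d
  have hsplit : (∫ x in a..b, k x) = (∫ x in a..u, k x) + (∫ x in u..v, k x) + (∫ x in v..b, k x) := by
    rw [intervalIntegral.integral_add_adjacent_intervals (hInt a u) (hInt u v),
      intervalIntegral.integral_add_adjacent_intervals ((hInt a u).trans (hInt u v)) (hInt v b)]
  have h2 : 0 ≤ ∫ x in a..u, k x :=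
    intervalIntegral.integral_nonneg humem.1.le
      (fun x hxx => hnn x ⟨hxx.1, hxx.2.trans humem.2.le⟩)
  have h3 : 0 ≤ ∫ x in v..b, k x :=
    intervalIntegral.integral_nonneg hvmem.2.le
      (fun x hxx => hnn x ⟨hvmem.1.le.trans hxx.1, hxx.2⟩)
  have h4 : (v - u) * (k x₀ / 2) ≤ ∫ x in u..v, k x := by
    have := intervalIntegral.integral_mono_on (f := fun _ => k x₀ / 2) (g := k) huv.le
      (intervalIntegrable_const) (hInt u v)
      (fun x hxx => le_of_lt (mem_Ioi.1 (hball hxx).2))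
    simpa [mul_div_assoc] using this
  have h5 : 0 < (v - u) * (k x₀ / 2) := by
    apply mul_pos (by simp only [hu, hv]; linarith) (by linarith)
  linarith

lemma mem_milneDomain {L : ℝ} {p : ℝ × ℝ × ℝ} :
    p ∈ milneDomain L ↔ p.1 ∈ Icc (0:ℝ) L ∧ p.2.1 ∈ Icc (-(π/2)) (π/2) ∧ p.2.2 ∈ Icc (-π) π :=
  Iff.rfl

lemma key (R₁ R₂ n ε : ℝ) (hε : 0 < ε)
    (hden : ∀ η ∈ Icc (0:ℝ) (layerL ε n), 0 < R₁ - ε*η ∧ 0 < R₂ - ε*η)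
    (f : ℝ × ℝ × ℝ → ℝ)
    (hf : IsMilneSolution R₁ R₂ ε n (fun _ _ => 0) (fun _ => 0) f) :
    ∀ p ∈ milneDomain (layerL ε n), f p ≤ 0 := by
  have hπ := Real.pi_pos
  set L := layerL ε n with hLdef
  have hLpos : 0 < L := Real.rpow_pos_of_pos hε _
  set D := milneDomain L with hDdef
  have hphi : -(π/2) < (π/2) := by linarith
  have hpsi : -π < π := by linarith
  -- Tietze extension of f
  have hfc : ContinuousOn f D := hf.smooth.continuousOn
  have hDclosed : IsClosed D := isClosed_Icc.prod (isClosed_Icc.prod isClosed_Icc)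
  obtain ⟨g, hg⟩ := ContinuousMap.exists_restrict_eq (Y := ℝ) hDclosed ⟨_, hfc.restrict⟩
  have hgf : ∀ p ∈ D, g p = f p := fun p hp => DFunLike.congr_fun hg ⟨p, hp⟩
  have hgc : Continuous (g : ℝ × ℝ × ℝ → ℝ) := g.continuous
  -- continuity of the averaged quantities
  have hinner : Continuous (fun q : ℝ × ℝ => ∫ φ in (-(π/2))..(π/2), g (q.1, φ, q.2) * Real.cos φ) := by
    apply intervalIntegral.continuous_parametric_intervalIntegral_of_continuous'
      (f := fun (q : ℝ × ℝ) (φ : ℝ) => g (q.1, φ, q.2) * Real.cos φ)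
    apply Continuous.mul
    · exact hgc.comp (by fun_prop)
    · fun_prop
  have hAvgG : Continuous (fun η : ℝ => angAvg g η) := by
    unfold angAvg
    apply Continuous.mul continuous_const
    apply intervalIntegral.continuous_parametric_intervalIntegral_of_continuous'
      (f := fun (η ψ : ℝ) => ∫ φ in (-(π/2))..(π/2), g (η, φ, ψ) * Real.cos φ)
    exact hinner
  have hAvgEq : ∀ η ∈ Icc (0:ℝ) L, angAvg f η = angAvg g η := by
    intro η hη
    unfold angAvg
    congr 1
    apply intervalIntegral.integral_congr
    intro ψ hψ
    rw [uIcc_of_le hpsi.le] at hψ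
    apply intervalIntegral.integral_congr
    intro φ hφ
    rw [uIcc_of_le hphi.le] at hφ
    have : (η, φ, ψ) ∈ D := ⟨hη, hφ, hψ⟩
    simp only [(hgf _ this).symm]
  have hIg : ∀ η ψ : ℝ, IntervalIntegrable (fun φ => g (η, φ, ψ) * Real.cos φ)
      volume (-(π/2)) (π/2) := by
    intro η ψ
    apply Continuous.intervalIntegrable
    exact (hgc.comp (by fun_prop)).mul Real.continuous_cos
  have hIginner : ∀ η : ℝ, IntervalIntegrable
      (fun ψ => ∫ φ in (-(π/2))..(π/2), g (η, φ, ψ) * Real.cos φ) volume (-π) π := by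
    intro η
    apply Continuous.intervalIntegrable
    exact hinner.comp (Continuous.prodMk continuous_const continuous_id)
  -- the average is bounded by any upper bound of f on D
  have havg_le : ∀ M : ℝ, (∀ p ∈ D, f p ≤ M) → ∀ η ∈ Icc (0:ℝ) L, angAvg f η ≤ M := by
    intro M hM η hη
    rw [hAvgEq η hη]
    have h2 : ∀ ψ ∈ Icc (-π) π,
        (∫ φ in (-(π/2))..(π/2), g (η, φ, ψ) * Real.cos φ) ≤ 2 * M := by
      intro ψ hψ
      have hb : (∫ φ in (-(π/2))..(π/2), g (η, φ, ψ) * Real.cos φ)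
          ≤ ∫ φ in (-(π/2))..(π/2), M * Real.cos φ := by
        have hMcos : Continuous (fun φ : ℝ => M * Real.cos φ) := by fun_prop
        apply intervalIntegral.integral_mono_on hphi.le (hIg η ψ) (hMcos.intervalIntegrable _ _)
        intro φ hφ
        have hcos : 0 ≤ Real.cos φ := Real.cos_nonneg_of_mem_Icc hφ
        have hDm : (η, φ, ψ) ∈ D := ⟨hη, hφ, hψ⟩
        have := hM _ hDm
        rw [hgf _ hDm]
        exact mul_le_mul_of_nonneg_right this hcos
      rw [intervalIntegral.integral_const_mul, integral_cos] at hb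
      simp only [Real.sin_pi_div_two, Real.sin_neg] at hb
      linarith
    have h3 : (∫ ψ in (-π)..π, ∫ φ in (-(π/2))..(π/2), g (η, φ, ψ) * Real.cos φ)
        ≤ ∫ _ in (-π)..π, (2*M : ℝ) := by
      apply intervalIntegral.integral_mono_on hpsi.le (hIginner η) intervalIntegrable_const h2
    rw [intervalIntegral.integral_const] at h3
    unfold angAvg
    rw [div_mul_eq_mul_div, one_mul, div_le_iff₀ (by positivity)]
    calc (∫ ψ in (-π)..π, ∫ φ in (-(π/2))..(π/2), g (η, φ, ψ) * Real.cos φ)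
        ≤ (π - -π) • (2*M) := h3
      _ = M * (4*π) := by simp [smul_eq_mul]; ring
  have hMint : ∀ M : ℝ, IntervalIntegrable (fun φ : ℝ => M * Real.cos φ)
      volume (-(π/2)) (π/2) := by
    intro M
    exact Continuous.intervalIntegrable (by fun_prop) _ _
  have hMcosval : ∀ M : ℝ, (∫ φ in (-(π/2))..(π/2), M * Real.cos φ) = 2 * M := by
    intro M
    rw [intervalIntegral.integral_const_mul, integral_cos]
    simp only [Real.sin_pi_div_two, Real.sin_neg]
    ring
  -- if the average attains the max, the whole slice is constant
  have hslice : ∀ (M η₀ : ℝ), η₀ ∈ Icc (0:ℝ) L → (∀ p ∈ D, f p ≤ M) → angAvg f η₀ = M →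
      f (η₀, π/2, 0) = M := by
    intro M η₀ hη₀ hM havg
    have hgle : ∀ φ ∈ Icc (-(π/2)) (π/2), ∀ ψ ∈ Icc (-π) π, g (η₀, φ, ψ) ≤ M := by
      intro φ hφ ψ hψ
      have hDm : (η₀, φ, ψ) ∈ D := ⟨hη₀, hφ, hψ⟩
      rw [hgf _ hDm]; exact hM _ hDm
    have hgM : ∀ φ ∈ Ioo (-(π/2)) (π/2), ∀ ψ ∈ Ioo (-π) π, g (η₀, φ, ψ) = M := by
      intro φ₁ hφ₁ ψ₁ hψ₁
      by_contra hne
      have hlt : g (η₀, φ₁, ψ₁) < M :=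
        lt_of_le_of_ne (hgle _ (Ioo_subset_Icc_self hφ₁) _ (Ioo_subset_Icc_self hψ₁)) hne
      set kψ : ℝ → ℝ := fun ψ => ∫ φ in (-(π/2))..(π/2), (M - g (η₀, φ, ψ)) * Real.cos φ
        with hkψdef
      have hkc : Continuous kψ := by
        apply intervalIntegral.continuous_parametric_intervalIntegral_of_continuous'
          (f := fun (ψ φ : ℝ) => (M - g (η₀, φ, ψ)) * Real.cos φ)
        apply Continuous.mul
        · exact continuous_const.sub (hgc.comp (by fun_prop))
        · fun_prop
      have hknn : ∀ ψ ∈ Icc (-π) π, 0 ≤ kψ ψ := by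
        intro ψ hψ
        apply intervalIntegral.integral_nonneg hphi.le
        intro φ hφ
        exact mul_nonneg (by linarith [hgle φ hφ ψ hψ]) (Real.cos_nonneg_of_mem_Icc hφ)
      have hkpos : 0 < kψ ψ₁ := by
        apply integral_pos_aux
        · exact (continuous_const.sub (hgc.comp (by fun_prop))).mul Real.continuous_cos
        · intro φ hφ
          exact mul_nonneg (by linarith [hgle φ hφ ψ₁ (Ioo_subset_Icc_self hψ₁)])
            (Real.cos_nonneg_of_mem_Icc hφ)
        · exact hφ₁
        · exact mul_pos (by linarith) (Real.cos_pos_of_mem_Ioo hφ₁)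
      have hIavg : (∫ ψ in (-π)..π, ∫ φ in (-(π/2))..(π/2), g (η₀, φ, ψ) * Real.cos φ)
          = 4 * π * M := by
        have h1 : angAvg g η₀ = M := by rw [← hAvgEq η₀ hη₀]; exact havg
        unfold angAvg at h1
        rw [div_mul_eq_mul_div, one_mul, div_eq_iff (by positivity : (4*π : ℝ) ≠ 0)] at h1
        linarith
      have hktot : (∫ ψ in (-π)..π, kψ ψ) = 0 := by
        have hsplit : ∀ ψ : ℝ, kψ ψ = (∫ φ in (-(π/2))..(π/2), M * Real.cos φ)
            - ∫ φ in (-(π/2))..(π/2), g (η₀, φ, ψ) * Real.cos φ := by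
          intro ψ
          rw [hkψdef, ← intervalIntegral.integral_sub (hMint M) (hIg η₀ ψ)]
          apply intervalIntegral.integral_congr
          intro φ hφ; ring
        have h2 : (∫ ψ in (-π)..π, kψ ψ) = (∫ ψ in (-π)..π,
            ((∫ φ in (-(π/2))..(π/2), M * Real.cos φ)
              - ∫ φ in (-(π/2))..(π/2), g (η₀, φ, ψ) * Real.cos φ)) := by
          apply intervalIntegral.integral_congr
          intro ψ hψ; exact hsplit ψ
        rw [h2, intervalIntegral.integral_sub intervalIntegrable_const (hIginner η₀), hIavg,
          hMcosval, intervalIntegral.integral_const]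
        simp [smul_eq_mul]
        ring
      have : 0 < ∫ ψ in (-π)..π, kψ ψ :=
        integral_pos_aux hkc hknn hψ₁ hkpos
      rw [hktot] at this
      exact lt_irrefl 0 this
    have hψ0 : (0:ℝ) ∈ Ioo (-π) π := ⟨by linarith, hπ⟩
    have hEq : EqOn (fun φ => g (η₀, φ, (0:ℝ))) (fun _ => M) (Ioo (-(π/2)) (π/2)) :=
      fun φ hφ => hgM φ hφ 0 hψ0
    have hclos := hEq.closure (hgc.comp (by fun_prop)) continuous_const
    have hmem2 : (π/2 : ℝ) ∈ closure (Ioo (-(π/2)) (π/2)) := by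
      rw [closure_Ioo (by linarith : -(π/2) ≠ (π/2))]
      exact ⟨by linarith, le_rfl⟩
    have hval : g (η₀, π/2, 0) = M := hclos hmem2
    rw [← hgf _ ⟨hη₀, ⟨by linarith, le_rfl⟩, ⟨by linarith, by linarith⟩⟩]
    exact hval
  -- topology of D
  have hDconv : Convex ℝ D := (convex_Icc _ _).prod ((convex_Icc _ _).prod (convex_Icc _ _))
  have hUD : UniqueDiffOn ℝ D :=
    (uniqueDiffOn_Icc hLpos).prod ((uniqueDiffOn_Icc hphi).prod (uniqueDiffOn_Icc hpsi))
  have hIntD : interior D = Ioo (0:ℝ) L ×ˢ Ioo (-(π/2)) (π/2) ×ˢ Ioo (-π) π := by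
    show interior (Icc (0:ℝ) L ×ˢ Icc (-(π/2)) (π/2) ×ˢ Icc (-π) π) = _
    rw [interior_prod_eq, interior_prod_eq, interior_Icc, interior_Icc, interior_Icc]
  have hclos : D ⊆ closure (interior D) := by
    rw [hIntD, closure_prod_eq, closure_prod_eq, closure_Ioo hLpos.ne,
      closure_Ioo (by linarith : -(π/2) ≠ π/2), closure_Ioo (by linarith : -π ≠ π)]
    exact fun p hp => hp
  -- continuity of the force term on D
  have hFc : ContinuousOn (fun p : ℝ×ℝ×ℝ => force R₁ R₂ ε p.1 p.2.2) D := by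
    unfold force
    apply ContinuousOn.mul continuousOn_const
    apply ContinuousOn.add
    · apply ContinuousOn.div (by fun_prop) (by fun_prop)
      intro p hp
      exact ((hden p.1 hp.1).1).ne'
    · apply ContinuousOn.div (by fun_prop) (by fun_prop)
      intro p hp
      exact ((hden p.1 hp.1).2).ne'
  have hdiffOn : DifferentiableOn ℝ f D := hf.smooth.differentiableOn one_ne_zero
  -- the extended equation, valid on all of D
  set Gfun : ℝ×ℝ×ℝ → ℝ := fun p => Real.sin p.2.1 * fderivWithin ℝ f D p (1,0,0) +
      force R₁ R₂ ε p.1 p.2.2 * Real.cos p.2.1 * fderivWithin ℝ f D p (0,1,0) +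
      f p - angAvg f p.1 with hGdef
  have hGc : ContinuousOn Gfun D := by
    have hDf : ContinuousOn (fun p => fderivWithin ℝ f D p) D :=
      hf.smooth.continuousOn_fderivWithin hUD le_rfl
    apply ContinuousOn.sub
    · apply ContinuousOn.add
      · apply ContinuousOn.add
        · exact (Continuous.continuousOn (by fun_prop : Continuous fun p : ℝ×ℝ×ℝ =>
            Real.sin p.2.1)).mul (hDf.clm_apply continuousOn_const)
        · exact (hFc.mul (Continuous.continuousOn (by fun_prop : Continuous fun p : ℝ×ℝ×ℝ =>
            Real.cos p.2.1))).mul (hDf.clm_apply continuousOn_const)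
      · exact hfc
    · exact ((hAvgG.comp continuous_fst).continuousOn).congr
        (fun p hp => hAvgEq p.1 hp.1)
  have hGint : ∀ p ∈ interior D, Gfun p = 0 := by
    intro p hp
    have hnh : D ∈ 𝓝 p := mem_interior_iff_mem_nhds.1 hp
    have hdiff : DifferentiableAt ℝ f p := (hdiffOn p (interior_subset hp)).differentiableAt hnh
    have h1 : dEta f p = fderivWithin ℝ f D p (1,0,0) := by
      have hline : HasDerivAt (fun t : ℝ => (t, p.2.1, p.2.2)) ((1:ℝ),(0:ℝ),(0:ℝ)) p.1 :=
        HasDerivAt.prodMk (hasDerivAt_id p.1) (HasDerivAt.prodMk (hasDerivAt_const _ _) (hasDerivAt_const _ _))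
      have hcomp := hdiff.hasFDerivAt.comp_hasDerivAt p.1 hline
      rw [fderivWithin_of_mem_nhds hnh]
      show deriv (fun t => f (t, p.2.1, p.2.2)) p.1 = _
      exact hcomp.deriv
    have h2 : dPhi f p = fderivWithin ℝ f D p (0,1,0) := by
      have hline : HasDerivAt (fun t : ℝ => (p.1, t, p.2.2)) ((0:ℝ),(1:ℝ),(0:ℝ)) p.2.1 :=
        HasDerivAt.prodMk (hasDerivAt_const _ _) (HasDerivAt.prodMk (hasDerivAt_id _) (hasDerivAt_const _ _))
      have hcomp := hdiff.hasFDerivAt.comp_hasDerivAt p.2.1 hline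
      rw [fderivWithin_of_mem_nhds hnh]
      show deriv (fun t => f (p.1, t, p.2.2)) p.2.1 = _
      exact hcomp.deriv
    have heqn := hf.eqn p hp
    show Real.sin p.2.1 * fderivWithin ℝ f D p (1,0,0) +
      force R₁ R₂ ε p.1 p.2.2 * Real.cos p.2.1 * fderivWithin ℝ f D p (0,1,0) +
      f p - angAvg f p.1 = 0
    rw [← h1, ← h2]
    simpa using heqn
  have hExt : ∀ p ∈ D, Gfun p = 0 := by
    intro p hp
    have hpc : p ∈ closure (interior D) := hclos hp
    have hne : (𝓝[interior D] p).NeBot := mem_closure_iff_nhdsWithin_neBot.1 hpc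
    have h1 : Tendsto Gfun (𝓝[interior D] p) (𝓝 (Gfun p)) :=
      ((hGc p hp).mono_left (nhdsWithin_mono p interior_subset))
    have h2 : Tendsto Gfun (𝓝[interior D] p) (𝓝 0) := by
      refine Tendsto.congr' ?_ tendsto_const_nhds
      filter_upwards [self_mem_nhdsWithin] with q hq
      exact (hGint q hq).symm
    exact tendsto_nhds_unique h1 h2
  -- maximum point
  have hDcpt : IsCompact D := isCompact_Icc.prod (isCompact_Icc.prod isCompact_Icc)
  have hDne : D.Nonempty := by
    have h1 : -(π/2) ≤ (0:ℝ) := by linarith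
    have h2 : (0:ℝ) ≤ π/2 := by linarith
    have h3 : -π ≤ (0:ℝ) := by linarith
    have h4 : (0:ℝ) ≤ π := by linarith
    exact ⟨(0, 0, 0), ⟨le_rfl, hLpos.le⟩, ⟨h1, h2⟩, h3, h4⟩
  obtain ⟨p₀, hp₀D, hp₀max⟩ := hDcpt.exists_isMaxOn hDne hfc
  set M := f p₀ with hMdef
  by_contra hcon
  push_neg at hcon
  obtain ⟨q', hq'D, hq'pos⟩ := hcon
  have hfM : ∀ p ∈ D, f p ≤ M := fun p hp => (isMaxOn_iff.1 hp₀max) p hp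
  have hMpos : 0 < M := lt_of_lt_of_le hq'pos (hfM q' hq'D)
  have hInfl : ∀ φ ψ : ℝ, 0 < Real.sin φ → φ ∈ Icc (-(π/2)) (π/2) → ψ ∈ Icc (-π) π →
      f (0, φ, ψ) = 0 := fun φ ψ h1 h2 h3 => hf.inflow (φ, ψ) ⟨h1, h2, h3⟩
  -- choose a max point with the right orientation at η = L
  obtain ⟨p₁, hp₁D, hp₁f, hp₁L⟩ : ∃ p₁ ∈ D, f p₁ = M ∧ (p₁.1 = L → 0 ≤ p₁.2.1) := by
    by_cases hc : p₀.1 = L ∧ p₀.2.1 < 0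
    · have hb1 : -(π/2) ≤ -p₀.2.1 := by linarith [hp₀D.2.1.2]
      have hb2 : -p₀.2.1 ≤ π/2 := by linarith [hp₀D.2.1.1]
      have hb3 : (0:ℝ) ≤ -p₀.2.1 := by linarith [hc.2]
      refine ⟨(L, -p₀.2.1, p₀.2.2), ⟨⟨hLpos.le, le_rfl⟩, ⟨hb1, hb2⟩, hp₀D.2.2⟩, ?_,
        fun _ => hb3⟩
      have h1 : f (L, -p₀.2.1, p₀.2.2) = f (L, p₀.2.1, p₀.2.2) :=
        (hf.reflect p₀.2.1 p₀.2.2).symm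
      rw [h1, ← hc.1]
    · push_neg at hc
      exact ⟨p₀, hp₀D, rfl, hc⟩
  -- first-order conditions at the maximum point
  have hmax1 : IsLocalMaxOn f D p₁ := by
    have h : IsMaxOn f D p₁ := isMaxOn_iff.2 fun x hx => (hfM x hx).trans_eq hp₁f.symm
    exact h.localize
  have hdW : HasFDerivWithinAt f (fderivWithin ℝ f D p₁) D p₁ :=
    (hdiffOn p₁ hp₁D).hasFDerivWithinAt
  have hcone : ∀ y : ℝ×ℝ×ℝ, p₁ + y ∈ D → fderivWithin ℝ f D p₁ y ≤ 0 := by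
    intro y hy
    exact hmax1.hasFDerivWithinAt_nonpos hdW
      (mem_posTangentConeAt_of_segment_subset (hDconv.segment_subset hp₁D hy))
  have hmemadd : ∀ c : ℝ, 0 ≤ p₁.1 + c → p₁.1 + c ≤ L → p₁ + (c, 0, 0) ∈ D := by
    intro c h1 h2
    refine ⟨⟨h1, h2⟩, ?_, ?_⟩
    · simpa using hp₁D.2.1
    · simpa using hp₁D.2.2
  have hmemphi : ∀ c : ℝ, -(π/2) ≤ p₁.2.1 + c → p₁.2.1 + c ≤ π/2 → p₁ + (0, c, 0) ∈ D := by
    intro c h1 h2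
    refine ⟨?_, ⟨h1, h2⟩, ?_⟩
    · simpa using hp₁D.1
    · simpa using hp₁D.2.2
  have hD1le : ∀ c : ℝ, p₁ + (c, 0, 0) ∈ D → c * fderivWithin ℝ f D p₁ (1,0,0) ≤ 0 := by
    intro c hc
    have h := hcone (c, 0, 0) hc
    rw [show ((c:ℝ), (0:ℝ), (0:ℝ)) = c • ((1:ℝ),(0:ℝ),(0:ℝ)) by simp] at h
    rw [ContinuousLinearMap.map_smul, smul_eq_mul] at h
    exact h
  have hD2le : ∀ c : ℝ, p₁ + (0, c, 0) ∈ D → c * fderivWithin ℝ f D p₁ (0,1,0) ≤ 0 := by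
    intro c hc
    have h := hcone (0, c, 0) hc
    rw [show ((0:ℝ), (c:ℝ), (0:ℝ)) = c • ((0:ℝ),(1:ℝ),(0:ℝ)) by simp] at h
    rw [ContinuousLinearMap.map_smul, smul_eq_mul] at h
    exact h
  have hA : 0 ≤ Real.sin p₁.2.1 * fderivWithin ℝ f D p₁ (1,0,0) := by
    rcases eq_or_lt_of_le hp₁D.1.1 with h0 | h0
    · -- η₁ = 0
      have hφle : p₁.2.1 ≤ 0 := by
        by_contra hpos
        push_neg at hpos
        have hs : 0 < Real.sin p₁.2.1 :=
          Real.sin_pos_of_pos_of_lt_pi hpos (by linarith [hp₁D.2.1.2])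
        have hz := hInfl p₁.2.1 p₁.2.2 hs hp₁D.2.1 hp₁D.2.2
        have hp₁eq : p₁ = (0, p₁.2.1, p₁.2.2) := by rw [h0]
        have hM0 : M = 0 := by rw [← hp₁f, hp₁eq]; exact hz
        linarith
      have hsin : Real.sin p₁.2.1 ≤ 0 :=
        Real.sin_nonpos_of_nonpos_of_neg_pi_le hφle (by linarith [hp₁D.2.1.1])
      have hD1 : fderivWithin ℝ f D p₁ (1,0,0) ≤ 0 := by
        have h := hD1le L (hmemadd L (by linarith) (by linarith))
        nlinarith
      nlinarith
    · rcases eq_or_lt_of_le hp₁D.1.2 with hL1 | hL1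
      · -- η₁ = L
        have hφ : 0 ≤ p₁.2.1 := hp₁L hL1
        have hsin : 0 ≤ Real.sin p₁.2.1 :=
          Real.sin_nonneg_of_nonneg_of_le_pi hφ (by linarith [hp₁D.2.1.2])
        have hD1 : 0 ≤ fderivWithin ℝ f D p₁ (1,0,0) := by
          have h := hD1le (-L) (hmemadd (-L) (by linarith) (by linarith))
          nlinarith
        exact mul_nonneg hsin hD1
      · -- 0 < η₁ < L
        have ha := hD1le (L - p₁.1) (hmemadd _ (by linarith) (by linarith))
        have hb := hD1le (-p₁.1) (hmemadd _ (by linarith) (by linarith))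
        have : fderivWithin ℝ f D p₁ (1,0,0) = 0 := by nlinarith
        rw [this, mul_zero]
  have hB : 0 ≤ force R₁ R₂ ε p₁.1 p₁.2.2 * Real.cos p₁.2.1 * fderivWithin ℝ f D p₁ (0,1,0) := by
    rcases eq_or_lt_of_le hp₁D.2.1.1 with hl | hl
    · rw [← hl]
      simp [Real.cos_pi_div_two]
    · rcases eq_or_lt_of_le hp₁D.2.1.2 with hr | hr
      · rw [hr]
        simp [Real.cos_pi_div_two]
      · have hc1 := hD2le (π/2 - p₁.2.1) (hmemphi _ (by linarith) (by linarith))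
        have hc2 := hD2le (-(π/2) - p₁.2.1) (hmemphi _ (by linarith) (by linarith))
        have : fderivWithin ℝ f D p₁ (0,1,0) = 0 := by nlinarith
        rw [this, mul_zero]
  -- the average attains the maximum
  have havgM : angAvg f p₁.1 = M := by
    have h1 : angAvg f p₁.1 ≤ M := havg_le M hfM p₁.1 hp₁D.1
    have h2 := hExt p₁ hp₁D
    simp only [hGdef] at h2
    rw [hp₁f] at h2
    linarith
  have huM : f (p₁.1, π/2, 0) = M := hslice M p₁.1 hp₁D.1 hfM havgM
  -- the ODE along the line φ = π/2, ψ = 0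
  set u : ℝ → ℝ := fun s => f (s, π/2, 0) with hudef
  have hmemline : ∀ s ∈ Icc (0:ℝ) L, (s, π/2, (0:ℝ)) ∈ D := fun s hs =>
    ⟨hs, ⟨by linarith, le_rfl⟩, ⟨by linarith, by linarith⟩⟩
  have hucont : ContinuousOn u (Icc 0 L) := by
    apply hfc.comp (Continuous.continuousOn (by fun_prop))
    intro s hs; exact hmemline s hs
  have huderiv : ∀ s ∈ Ioo (0:ℝ) L, HasDerivAt u (angAvg f s - u s) s := by
    intro s hs
    have hpt : (s, π/2, (0:ℝ)) ∈ D := hmemline s ⟨hs.1.le, hs.2.le⟩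
    have hline : HasDerivWithinAt (fun t : ℝ => (t, π/2, (0:ℝ))) ((1:ℝ),(0:ℝ),(0:ℝ))
        (Icc 0 L) s :=
      (HasDerivAt.prodMk (hasDerivAt_id s) (HasDerivAt.prodMk (hasDerivAt_const _ _)
        (hasDerivAt_const _ _))).hasDerivWithinAt
    have hcomp := HasFDerivWithinAt.comp_hasDerivWithinAt s
      ((hdiffOn _ hpt).hasFDerivWithinAt) hline (fun t ht => hmemline t ht)
    have hDA : HasDerivAt u (fderivWithin ℝ f D (s, π/2, 0) (1,0,0)) s :=
      hcomp.hasDerivAt (Icc_mem_nhds hs.1 hs.2)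
    have hGeq := hExt _ hpt
    simp only [hGdef, Real.sin_pi_div_two, Real.cos_pi_div_two] at hGeq
    simp only [one_mul, mul_zero, zero_mul, add_zero] at hGeq
    have hval : fderivWithin ℝ f D (s, π/2, 0) (1,0,0) = angAvg f s - u s := by
      simp only [hudef]
      linarith
    exact hval ▸ hDA
  have hGm : MonotoneOn (fun s => Real.exp s * (M - u s)) (Icc 0 L) := by
    apply monotoneOn_of_deriv_nonneg (convex_Icc 0 L)
    · exact (Real.continuous_exp.continuousOn).mul (continuousOn_const.sub hucont)
    · rw [interior_Icc]
      intro s hs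
      exact (((Real.hasDerivAt_exp s).mul ((hasDerivAt_const s M).sub
        (huderiv s hs))).differentiableAt).differentiableWithinAt
    · rw [interior_Icc]
      intro s hs
      have hd : HasDerivAt (fun s => Real.exp s * (M - u s))
          (Real.exp s * (M - u s) + Real.exp s * (0 - (angAvg f s - u s))) s :=
        HasDerivAt.mul (Real.hasDerivAt_exp s) (HasDerivAt.sub (hasDerivAt_const s M) (huderiv s hs))
      rw [hd.deriv]
      have havgs := havg_le M hfM s ⟨hs.1.le, hs.2.le⟩
      have hrw : Real.exp s * (M - u s) + Real.exp s * (0 - (angAvg f s - u s))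
          = Real.exp s * (M - angAvg f s) := by ring
      rw [hrw]
      have := Real.exp_pos s
      nlinarith
  have hu0 : u 0 = 0 :=
    hInfl (π/2) 0 (by rw [Real.sin_pi_div_two]; norm_num) ⟨by linarith, le_rfl⟩
      ⟨by linarith, by linarith⟩
  have hmono := hGm ⟨le_rfl, hLpos.le⟩ hp₁D.1 hp₁D.1.1
  simp only [hu0, sub_zero, Real.exp_zero, one_mul] at hmono
  have huη : u p₁.1 = M := huM
  rw [huη, sub_self, mul_zero] at hmono
  linarith







lemma IsMilneSolution.neg_sol {R₁ R₂ ε n : ℝ} {f : ℝ × ℝ × ℝ → ℝ}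
    (h : IsMilneSolution R₁ R₂ ε n (fun _ _ => 0) (fun _ => 0) f) :
    IsMilneSolution R₁ R₂ ε n (fun _ _ => 0) (fun _ => 0) (fun p => -f p) := by
  constructor
  · exact h.smooth.neg
  · intro p hp
    have he : Real.sin p.2.1 * dEta f p + force R₁ R₂ ε p.1 p.2.2 * Real.cos p.2.1 * dPhi f p
        + f p - angAvg f p.1 = 0 := h.eqn p hp
    have h1 : dEta (fun p => -f p) p = -dEta f p := deriv.neg
    have h2 : dPhi (fun p => -f p) p = -dPhi f p := deriv.neg
    have h3 : angAvg (fun p => -f p) p.1 = -angAvg f p.1 := by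
      unfold angAvg
      rw [← mul_neg]
      congr 1
      rw [← intervalIntegral.integral_neg]
      apply intervalIntegral.integral_congr
      intro ψ hψ
      show (∫ φ in (-(π/2))..(π/2), -f (p.1, φ, ψ) * Real.cos φ)
          = -∫ φ in (-(π/2))..(π/2), f (p.1, φ, ψ) * Real.cos φ
      rw [← intervalIntegral.integral_neg]
      apply intervalIntegral.integral_congr
      intro φ hφ
      ring
    show Real.sin p.2.1 * dEta (fun p => -f p) p
        + force R₁ R₂ ε p.1 p.2.2 * Real.cos p.2.1 * dPhi (fun p => -f p) p
        + (-f p) - angAvg (fun p => -f p) p.1 = 0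
    rw [h1, h2, h3]
    linear_combination -he
  · intro q hq
    simp [h.inflow q hq]
  · intro φ ψ
    simp [h.reflect φ ψ]

/-- uniqueness part of Theorem "Milne theorem 1": the only classical
solution with zero in-flow data and zero source is the zero function on `D`. -/
theorem milne_uniqueness (R₁ R₂ n : ℝ) (hR₁ : 0 < R₁) (hR₂ : 0 < R₂)
    (hn : n ∈ Ioo (0 : ℝ) (1 / 2)) :
    ∃ ε₀ ∈ Ioo (0 : ℝ) 1, ∀ ε ∈ Ioc (0 : ℝ) ε₀, ∀ f : ℝ × ℝ × ℝ → ℝ,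
      IsMilneSolution R₁ R₂ ε n (fun _ _ => 0) (fun _ => 0) f →
      ∀ p ∈ milneDomain (layerL ε n), f p = 0 := by
  have hn1 : 0 < 1 - n := by linarith [hn.2]
  have hRm : 0 < min R₁ R₂ := lt_min hR₁ hR₂
  set ε₀ : ℝ := min (1/2) ((min R₁ R₂ / 2) ^ ((1:ℝ)/(1-n))) with hε₀def
  have hε₀pos : 0 < ε₀ := lt_min (by norm_num) (Real.rpow_pos_of_pos (by positivity) _)
  refine ⟨ε₀, ⟨hε₀pos, lt_of_le_of_lt (min_le_left _ _) (by norm_num)⟩, ?_⟩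
  intro ε hε f hfsol
  have hεpos : 0 < ε := hε.1
  have hden : ∀ η ∈ Icc (0:ℝ) (layerL ε n), 0 < R₁ - ε*η ∧ 0 < R₂ - ε*η := by
    intro η hη
    have h1 : ε * η ≤ ε * layerL ε n := mul_le_mul_of_nonneg_left hη.2 hεpos.le
    have h2 : ε * layerL ε n = ε ^ ((1:ℝ) - n) := by
      unfold layerL
      rw [show (1:ℝ) - n = 1 + (-n) by ring, Real.rpow_add hεpos, Real.rpow_one]
    have h3 : ε ^ ((1:ℝ)-n) ≤ ε₀ ^ ((1:ℝ)-n) := Real.rpow_le_rpow hεpos.le hε.2 hn1.le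
    have h4 : ε₀ ^ ((1:ℝ)-n) ≤ min R₁ R₂ / 2 := by
      have hle : ε₀ ≤ (min R₁ R₂ / 2) ^ ((1:ℝ)/(1-n)) := min_le_right _ _
      have h5 := Real.rpow_le_rpow hε₀pos.le hle hn1.le
      have h6 : ((min R₁ R₂ / 2) ^ ((1:ℝ)/(1-n))) ^ ((1:ℝ)-n) = min R₁ R₂ / 2 := by
        rw [← Real.rpow_mul (by positivity), one_div, inv_mul_cancel₀ hn1.ne', Real.rpow_one]
      rw [h6] at h5
      exact h5
    have h7 : ε * η ≤ min R₁ R₂ / 2 := by linarith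
    constructor
    · have : min R₁ R₂ ≤ R₁ := min_le_left _ _
      linarith
    · have : min R₁ R₂ ≤ R₂ := min_le_right _ _
      linarith
  intro p hp
  have hle := key R₁ R₂ n ε hεpos hden f hfsol p hp
  have hge' := key R₁ R₂ n ε hεpos hden (fun p => -f p) hfsol.neg_sol p hp
  have hge : -f p ≤ 0 := hge'
  linarith


end MilneStmt
end
end

section
/- Decay for the local ε-Milne problem (Theorem 'Milne theorem 2′'): Let K > 0 and M > 0. There exist ε₀ ∈ (0,1), K₀ ∈ (0, min(K, 1/2)] and C > 0, depending only on R₁, R₂, n, K and M, such that for every ε ∈ (0, ε₀] the following holds: if W ∈ C¹(D) satisfies sin φ · ∂W/∂η + F(η,ψ) cos φ · ∂W/∂φ + W = S at every interior point of D, W(0,φ,ψ) = h(φ,ψ) whenever sin φ > 0, and W(L,φ,ψ) = W(L,−φ,ψ), where |h| ≤ M on {sin φ > 0} and e^{Kη}|S| ≤ M on D, then ‖e^{K₀η} W‖_{L²} + ‖e^{K₀η} W‖_{L∞} ≤ C. -/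
noncomputable section

open Real Set MeasureTheory

namespace MilneStmt

section Aux

open Topology Filter

-- basic domain facts
lemma milne_convex (L : ℝ) : Convex ℝ (milneDomain L) :=
  (convex_Icc _ _).prod ((convex_Icc _ _).prod (convex_Icc _ _))

lemma milne_compact (L : ℝ) : IsCompact (milneDomain L) :=
  isCompact_Icc.prod (isCompact_Icc.prod isCompact_Icc)

lemma milne_nonempty {L : ℝ} (hL : 0 < L) : (milneDomain L).Nonempty := by
  refine ⟨(0, 0, 0), ?_⟩
  have hπ := Real.pi_pos
  simp only [milneDomain, Set.mem_prod, Set.mem_Icc]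
  refine ⟨⟨le_rfl, hL.le⟩, ⟨by linarith, by linarith⟩, ⟨by linarith, by linarith⟩⟩

lemma milne_interior (L : ℝ) :
    interior (milneDomain L) = Ioo (0:ℝ) L ×ˢ Ioo (-(π/2)) (π/2) ×ˢ Ioo (-π) π := by
  rw [milneDomain, interior_prod_eq, interior_prod_eq, interior_Icc, interior_Icc, interior_Icc]

lemma milne_closure {L : ℝ} (hL : 0 < L) :
    closure (interior (milneDomain L)) = milneDomain L := by
  have hπ := Real.pi_pos
  rw [milne_interior, milneDomain, closure_prod_eq, closure_prod_eq,
    closure_Ioo hL.ne, closure_Ioo (by linarith : -(π/2) ≠ π/2),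
    closure_Ioo (by linarith : -π ≠ π)]

lemma milne_uniqueDiff {L : ℝ} (hL : 0 < L) : UniqueDiffOn ℝ (milneDomain L) := by
  refine uniqueDiffOn_convex (milne_convex L) ?_
  rw [milne_interior]
  have hπ := Real.pi_pos
  exact ⟨(L/2, 0, 0), ⟨by linarith, by linarith⟩, ⟨by linarith, by linarith⟩,
    ⟨by linarith, by linarith⟩⟩
set_option maxHeartbeats 2000000 in
lemma milne_max_principle (R₁ R₂ ε L K₁ M : ℝ)
    (hε : 0 < ε) (hL : 0 < L)
    (hd1 : ∀ η ∈ Icc (0:ℝ) L, 0 < R₁ - ε * η) (hd2 : ∀ η ∈ Icc (0:ℝ) L, 0 < R₂ - ε * η)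
    (hK₁ : 0 < K₁) (hK₁2 : K₁ ≤ 1/2) (hM : 0 ≤ M)
    (h : ℝ → ℝ → ℝ) (S W : ℝ × ℝ × ℝ → ℝ)
    (hW : ContDiffOn ℝ 1 W (milneDomain L))
    (heqn : ∀ p ∈ interior (milneDomain L),
      Real.sin p.2.1 * dEta W p + force R₁ R₂ ε p.1 p.2.2 * Real.cos p.2.1 * dPhi W p + W p = S p)
    (hinf : ∀ q ∈ inflowSet, W (0, q.1, q.2) = h q.1 q.2)
    (hrefl : ∀ φ ψ : ℝ, W (L, φ, ψ) = W (L, -φ, ψ))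
    (hhb : ∀ q ∈ inflowSet, |h q.1 q.2| ≤ M)
    (hSb : ∀ p ∈ milneDomain L, |S p| ≤ M * Real.exp (-(K₁ * p.1))) :
    ∀ p ∈ milneDomain L, Real.exp (K₁ * p.1) * W p ≤ 2 * M := by
  set D := milneDomain L with hD
  set g : ℝ × ℝ × ℝ → ℝ := fun p => Real.exp (K₁ * p.1) * W p with hg
  have hWdiff : DifferentiableOn ℝ W D := hW.differentiableOn one_ne_zero
  have hgcont : ContinuousOn g D :=
    ((Real.continuous_exp.comp (continuous_const.mul continuous_fst)).continuousOn).mul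
      hW.continuousOn
  -- the continuous extension Λ of the transport operator
  set Λ : ℝ × ℝ × ℝ → ℝ := fun p =>
    Real.sin p.2.1 * (fderivWithin ℝ W D p) (1, 0, 0)
      + force R₁ R₂ ε p.1 p.2.2 * Real.cos p.2.1 * (fderivWithin ℝ W D p) (0, 1, 0)
      + W p with hΛdef
  have hforce_cont : ContinuousOn (fun p : ℝ × ℝ × ℝ => force R₁ R₂ ε p.1 p.2.2) D := by
    unfold force
    apply ContinuousOn.mul continuousOn_const
    apply ContinuousOn.add
    · exact ContinuousOn.div (by fun_prop) (by fun_prop)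
        (fun p hp => ne_of_gt (hd1 p.1 hp.1))
    · exact ContinuousOn.div (by fun_prop) (by fun_prop)
        (fun p hp => ne_of_gt (hd2 p.1 hp.1))
  have hWdcont : ContinuousOn (fun p => fderivWithin ℝ W D p) D :=
    hW.continuousOn_fderivWithin (milne_uniqueDiff hL) le_rfl
  have hΛcont : ContinuousOn Λ D := by
    apply ContinuousOn.add
    apply ContinuousOn.add
    · exact ((Real.continuous_sin.comp (continuous_snd.fst)).continuousOn).mul
        (hWdcont.clm_apply continuousOn_const)
    · exact (hforce_cont.mul
        ((Real.continuous_cos.comp (continuous_snd.fst)).continuousOn)).mul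
        (hWdcont.clm_apply continuousOn_const)
    · exact hW.continuousOn
  have hΛeq : ∀ p ∈ interior D, Λ p = S p := by
    intro p hp
    have hpD : D ∈ 𝓝 p := mem_interior_iff_mem_nhds.mp hp
    have hdiff : DifferentiableAt ℝ W p := (hWdiff p (interior_subset hp)).differentiableAt hpD
    have hfw : fderivWithin ℝ W D p = fderiv ℝ W p := fderivWithin_of_mem_nhds hpD
    have h1 : dEta W p = fderiv ℝ W p (1, 0, 0) := by
      have hl : HasDerivAt (fun t : ℝ => ((t, p.2.1, p.2.2) : ℝ × ℝ × ℝ))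
          ((1 : ℝ), ((0 : ℝ), (0 : ℝ))) p.1 :=
        (hasDerivAt_id p.1).prodMk (hasDerivAt_const _ _)
      exact (hdiff.hasFDerivAt.comp_hasDerivAt p.1 hl).deriv
    have h2 : dPhi W p = fderiv ℝ W p (0, 1, 0) := by
      have hl : HasDerivAt (fun t : ℝ => ((p.1, t, p.2.2) : ℝ × ℝ × ℝ))
          ((0 : ℝ), ((1 : ℝ), (0 : ℝ))) p.2.1 :=
        (hasDerivAt_const _ _).prodMk ((hasDerivAt_id p.2.1).prodMk (hasDerivAt_const _ _))
      exact (hdiff.hasFDerivAt.comp_hasDerivAt p.2.1 hl).deriv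
    have := heqn p hp
    rw [hΛdef]
    simp only [hfw, ← h1, ← h2]
    exact this
  have hΛb : ∀ p ∈ D, |Λ p| ≤ M * Real.exp (-(K₁ * p.1)) := by
    intro p hp
    have hpc : p ∈ closure (interior D) := (milne_closure hL).symm ▸ hp
    have hne : (𝓝[interior D] p).NeBot := mem_closure_iff_nhdsWithin_neBot.mp hpc
    have ht1 : Filter.Tendsto (fun q => |Λ q|) (𝓝[interior D] p) (𝓝 |Λ p|) :=
      (((hΛcont p hp).mono interior_subset)).abs
    have ht2 : Filter.Tendsto (fun q : ℝ × ℝ × ℝ => M * Real.exp (-(K₁ * q.1)))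
        (𝓝[interior D] p) (𝓝 (M * Real.exp (-(K₁ * p.1)))) := by
      exact ((continuous_const.mul
        (Real.continuous_exp.comp (continuous_const.mul continuous_fst).neg)).tendsto p).mono_left
        nhdsWithin_le_nhds
    refine le_of_tendsto_of_tendsto ht1 ht2 ?_
    filter_upwards [self_mem_nhdsWithin] with q hq
    rw [hΛeq q hq]
    exact hSb q (interior_subset hq)
  -- maximum principle at an adjusted maximum point
  have key : ∀ p₁ ∈ D, IsMaxOn g D p₁ → ¬(p₁.1 = L ∧ Real.sin p₁.2.1 < 0) → g p₁ ≤ 2 * M := by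
    intro p₁ hp₁ hmax hnc
    obtain ⟨hη, hφ, hψ⟩ := hp₁
    by_cases hin : p₁.1 = 0 ∧ 0 < Real.sin p₁.2.1
    · -- inflow boundary
      have hq : (p₁.2.1, p₁.2.2) ∈ inflowSet := ⟨hin.2, hφ, hψ⟩
      have : g p₁ = h p₁.2.1 p₁.2.2 := by
        have hpe : p₁ = (p₁.1, p₁.2.1, p₁.2.2) := rfl
        rw [hg]
        simp only
        rw [hpe, hin.1, hinf (p₁.2.1, p₁.2.2) hq]
        simp
      rw [this]
      calc h p₁.2.1 p₁.2.2 ≤ |h p₁.2.1 p₁.2.2| := le_abs_self _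
      _ ≤ M := hhb _ hq
      _ ≤ 2 * M := by linarith
    · -- interior-type estimate via the tangent cone
      set a := Real.sin p₁.2.1 with ha
      set c := force R₁ R₂ ε p₁.1 p₁.2.2 * Real.cos p₁.2.1 with hcdef
      have hcos : 0 ≤ Real.cos p₁.2.1 := Real.cos_nonneg_of_mem_Icc hφ
      have hF : force R₁ R₂ ε p₁.1 p₁.2.2 ≤ 0 := by
        unfold force
        have h1 : 0 ≤ Real.sin p₁.2.2 ^ 2 / (R₁ - ε * p₁.1) :=
          div_nonneg (sq_nonneg _) (hd1 p₁.1 hη).le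
        have h2 : 0 ≤ Real.cos p₁.2.2 ^ 2 / (R₂ - ε * p₁.1) :=
          div_nonneg (sq_nonneg _) (hd2 p₁.1 hη).le
        nlinarith
      have hc0 : c ≤ 0 := mul_nonpos_of_nonpos_of_nonneg hF hcos
      -- step sizes keeping the backward characteristic direction inside D
      have hδ1 : ∃ δ₁ > 0, 0 ≤ p₁.1 - δ₁ * a ∧ p₁.1 - δ₁ * a ≤ L := by
        rcases lt_trichotomy a 0 with h' | h' | h'
        · have hη' : p₁.1 < L := lt_of_le_of_ne hη.2 (fun hEq => hnc ⟨hEq, h'⟩)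
          have hane : a ≠ 0 := ne_of_lt h'
          refine ⟨(L - p₁.1) / (-a), div_pos (by linarith) (by linarith), ?_⟩
          have he : p₁.1 - (L - p₁.1) / (-a) * a = L := by
            field_simp [hane]
            ring
          rw [he]
          exact ⟨hL.le, le_rfl⟩
        · exact ⟨1, one_pos, by simp [h', hη.1], by simp [h', hη.2]⟩
        · have hη' : 0 < p₁.1 :=
            lt_of_le_of_ne hη.1 (fun hEq => hin ⟨hEq.symm, h'⟩)
          have hane : a ≠ 0 := ne_of_gt h'
          refine ⟨p₁.1 / a, div_pos hη' h', ?_⟩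
          have he : p₁.1 - p₁.1 / a * a = 0 := by
            field_simp [hane]
            ring
          rw [he]
          exact ⟨le_rfl, hL.le⟩
      have hδ2 : ∃ δ₂ > 0, -(π/2) ≤ p₁.2.1 - δ₂ * c ∧ p₁.2.1 - δ₂ * c ≤ π/2 := by
        rcases eq_or_lt_of_le hc0 with h' | h'
        · exact ⟨1, one_pos, by rw [h']; simpa using hφ.1, by rw [h']; simpa using hφ.2⟩
        · have hφ' : p₁.2.1 < π/2 := by
            rcases lt_or_eq_of_le hφ.2 with h'' | h''
            · exact h''
            · exfalso
              rw [hcdef, h'', Real.cos_pi_div_two, mul_zero] at h'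
              exact lt_irrefl 0 h'
          have hcne : c ≠ 0 := ne_of_lt h'
          refine ⟨(π/2 - p₁.2.1) / (-c), div_pos (by linarith) (by linarith), ?_⟩
          have he : p₁.2.1 - (π/2 - p₁.2.1) / (-c) * c = π/2 := by
            field_simp [hcne]
            ring
          rw [he]
          exact ⟨by linarith [hφ.1, hφ'], le_rfl⟩
      obtain ⟨δ₁, hδ₁pos, hδ₁b⟩ := hδ1
      obtain ⟨δ₂, hδ₂pos, hδ₂b⟩ := hδ2
      set δ := min δ₁ δ₂ with hδdef
      have hδpos : 0 < δ := lt_min hδ₁pos hδ₂pos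
      -- endpoint of the segment
      have hq1 : 0 ≤ p₁.1 - δ * a ∧ p₁.1 - δ * a ≤ L := by
        rcases le_or_gt a 0 with h' | h'
        · constructor
          · have : 0 ≤ δ * (-a) := mul_nonneg hδpos.le (by linarith)
            nlinarith [hη.1]
          · have h1 : δ * (-a) ≤ δ₁ * (-a) :=
              mul_le_mul_of_nonneg_right (min_le_left _ _) (by linarith)
            nlinarith [hδ₁b.2]
        · constructor
          · have h1 : δ * a ≤ δ₁ * a :=
              mul_le_mul_of_nonneg_right (min_le_left _ _) h'.le
            nlinarith [hδ₁b.1]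
          · have : 0 ≤ δ * a := mul_nonneg hδpos.le h'.le
            nlinarith [hη.2]
      have hq2 : -(π/2) ≤ p₁.2.1 - δ * c ∧ p₁.2.1 - δ * c ≤ π/2 := by
        constructor
        · have : 0 ≤ δ * (-c) := mul_nonneg hδpos.le (by linarith)
          nlinarith [hφ.1]
        · have h1 : δ * (-c) ≤ δ₂ * (-c) :=
            mul_le_mul_of_nonneg_right (min_le_right _ _) (by linarith)
          nlinarith [hδ₂b.2]
      have hend : p₁ + ((-(δ * a), -(δ * c), 0) : ℝ × ℝ × ℝ) ∈ D := by
        have hpe : p₁ + ((-(δ * a), -(δ * c), 0) : ℝ × ℝ × ℝ)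
            = (p₁.1 - δ * a, p₁.2.1 - δ * c, p₁.2.2) := by
          have h0 : p₁ = (p₁.1, p₁.2.1, p₁.2.2) := rfl
          rw [h0]
          simp only [Prod.mk_add_mk]
          refine Prod.ext ?_ (Prod.ext ?_ ?_) <;> simp <;> ring
        rw [hpe]
        exact ⟨hq1, hq2, hψ⟩
      have htan : ((-(δ * a), -(δ * c), 0) : ℝ × ℝ × ℝ) ∈ posTangentConeAt D p₁ :=
        mem_posTangentConeAt_of_segment_subset
          ((milne_convex L).segment_subset (⟨hη, hφ, hψ⟩ : p₁ ∈ D) hend)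
      -- derivative of g within D at p₁
      have hWd : HasFDerivWithinAt W (fderivWithin ℝ W D p₁) D p₁ :=
        (hWdiff p₁ ⟨hη, hφ, hψ⟩).hasFDerivWithinAt
      set Wd := fderivWithin ℝ W D p₁ with hWddef
      have hEf : HasFDerivAt (fun p : ℝ × ℝ × ℝ => K₁ * p.1)
          (K₁ • (ContinuousLinearMap.fst ℝ ℝ (ℝ × ℝ))) p₁ :=
        (hasFDerivAt_fst).const_smul K₁
      have hE : HasFDerivAt (fun p : ℝ × ℝ × ℝ => Real.exp (K₁ * p.1))
          (Real.exp (K₁ * p₁.1) • (K₁ • (ContinuousLinearMap.fst ℝ ℝ (ℝ × ℝ)))) p₁ :=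
        (Real.hasDerivAt_exp (K₁ * p₁.1)).comp_hasFDerivAt (f := fun p : ℝ × ℝ × ℝ => K₁ * p.1) p₁ hEf
      have hgd : HasFDerivWithinAt g
          (Real.exp (K₁ * p₁.1) • Wd + W p₁ • (Real.exp (K₁ * p₁.1) • (K₁ • (ContinuousLinearMap.fst ℝ ℝ (ℝ × ℝ))))) D p₁ :=
        (hE.hasFDerivWithinAt).mul hWd
      have hder := hmax.localize.hasFDerivWithinAt_nonpos hgd htan
      have hWdU : Wd ((-(δ * a), -(δ * c), 0) : ℝ × ℝ × ℝ)
          = -(δ * a) * Wd (1, 0, 0) + -(δ * c) * Wd (0, 1, 0) := by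
        have hu : ((-(δ * a), -(δ * c), 0) : ℝ × ℝ × ℝ)
            = (-(δ * a)) • ((1:ℝ), (0:ℝ), (0:ℝ)) + (-(δ * c)) • ((0:ℝ), (1:ℝ), (0:ℝ)) := by
          refine Prod.ext ?_ (Prod.ext ?_ ?_) <;> simp
        rw [hu, map_add, _root_.map_smul, _root_.map_smul, smul_eq_mul, smul_eq_mul]
      have happ : (Real.exp (K₁ * p₁.1) • Wd + W p₁ • (Real.exp (K₁ * p₁.1) • (K₁ • (ContinuousLinearMap.fst ℝ ℝ (ℝ × ℝ)))))
            ((-(δ * a), -(δ * c), 0) : ℝ × ℝ × ℝ)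
          = Real.exp (K₁ * p₁.1) * (-(δ * a) * Wd (1, 0, 0) + -(δ * c) * Wd (0, 1, 0))
            + W p₁ * (Real.exp (K₁ * p₁.1) * (K₁ * -(δ * a))) := by
        rw [ContinuousLinearMap.add_apply, ContinuousLinearMap.smul_apply,
          ContinuousLinearMap.smul_apply, ContinuousLinearMap.smul_apply,
          ContinuousLinearMap.smul_apply, hWdU]
        simp [smul_eq_mul]
      rw [happ] at hder
      set E₀ := Real.exp (K₁ * p₁.1) with hE₀
      have hE₀pos : 0 < E₀ := Real.exp_pos _
      have hineq : 0 ≤ E₀ * (a * Wd (1, 0, 0) + c * Wd (0, 1, 0)) + K₁ * a * (E₀ * W p₁) := by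
        nlinarith [hder, hδpos]
      have hΛp : Λ p₁ = a * Wd (1, 0, 0) + c * Wd (0, 1, 0) + W p₁ := rfl
      have hgp1 : g p₁ = E₀ * W p₁ := rfl
      have hkey2 : g p₁ * (1 - K₁ * a) ≤ E₀ * Λ p₁ := by
        rw [hΛp, hgp1]
        nlinarith [hineq]
      have hEΛ : E₀ * Λ p₁ ≤ M := by
        have h1 : E₀ * Λ p₁ ≤ E₀ * |Λ p₁| :=
          mul_le_mul_of_nonneg_left (le_abs_self _) hE₀pos.le
        have h2 : E₀ * |Λ p₁| ≤ E₀ * (M * Real.exp (-(K₁ * p₁.1))) :=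
          mul_le_mul_of_nonneg_left (hΛb p₁ ⟨hη, hφ, hψ⟩) hE₀pos.le
        have h3 : E₀ * (M * Real.exp (-(K₁ * p₁.1))) = M := by
          rw [hE₀, mul_comm, mul_assoc, ← Real.exp_add]
          simp
        linarith
      have hKa : (1:ℝ)/2 ≤ 1 - K₁ * a := by
        nlinarith [Real.sin_le_one p₁.2.1, Real.neg_one_le_sin p₁.2.1]
      by_cases hgp : g p₁ ≤ 0
      · linarith
      · push_neg at hgp
        nlinarith [hkey2, hEΛ, hKa, hgp]

  -- get a maximum point
  obtain ⟨p₀, hp₀D, hp₀max⟩ := (milne_compact L).exists_isMaxOn (milne_nonempty hL) hgcont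
  intro p hp
  have hle : g p ≤ g p₀ := hp₀max hp
  by_cases hc : p₀.1 = L ∧ Real.sin p₀.2.1 < 0
  · set p₁ : ℝ × ℝ × ℝ := (L, -p₀.2.1, p₀.2.2) with hp₁def
    have hgeq : g p₀ = g p₁ := by
      have : p₀ = (p₀.1, p₀.2.1, p₀.2.2) := rfl
      rw [hg]
      simp only [hp₁def]
      rw [this, hc.1]
      simp only
      rw [hrefl p₀.2.1 p₀.2.2]
    have hp₁D : p₁ ∈ D := by
      obtain ⟨h1, h2, h3⟩ := hp₀D
      exact ⟨⟨hL.le, le_rfl⟩, ⟨by simpa [hp₁def] using neg_le_neg h2.2, by simpa [hp₁def] using neg_le_neg h2.1⟩, h3⟩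
    have hmax1 : IsMaxOn g D p₁ := fun q hq => by
      calc g q ≤ g p₀ := hp₀max hq
      _ = g p₁ := hgeq
    have hnc : ¬(p₁.1 = L ∧ Real.sin p₁.2.1 < 0) := by
      rintro ⟨-, hs⟩
      rw [hp₁def] at hs
      simp only [Real.sin_neg] at hs
      linarith [hc.2]
    calc g p ≤ g p₀ := hle
    _ = g p₁ := hgeq
    _ ≤ 2 * M := key p₁ hp₁D hmax1 hnc
  · exact hle.trans (key p₀ hp₀D hp₀max hc)

lemma linf_aux (L B : ℝ) (hB : 0 ≤ B) (g : ℝ × ℝ × ℝ → ℝ)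
    (hb : ∀ p ∈ milneDomain L, |g p| ≤ B) : linfNorm L g ≤ B := by
  unfold linfNorm
  refine Real.iSup_le (fun p => ?_) hB
  exact Real.iSup_le (fun hp => hb p hp) hB

lemma exp_sq (x : ℝ) : Real.exp x ^ 2 = Real.exp (2 * x) := by
  rw [sq, ← Real.exp_add]; ring_nf

lemma l2_aux (L B K₀ : ℝ) (hL : 0 < L) (hK₀ : 0 < K₀) (hB : 0 ≤ B)
    (g : ℝ × ℝ × ℝ → ℝ) (hcont : ContinuousOn g (milneDomain L))
    (hb : ∀ p ∈ milneDomain L, |g p| ≤ B * Real.exp (-(K₀ * p.1))) :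
    l2Norm L g ≤ Real.sqrt (2 * π * B ^ 2 / K₀) := by
  have hπ := Real.pi_pos
  have hstep1 : ∀ η ∈ Icc (0:ℝ) L, ∀ ψ ∈ Icc (-π) π,
      (0 ≤ ∫ φ in (-(π/2))..(π/2), g (η, φ, ψ) ^ 2 * Real.cos φ) ∧
      (∫ φ in (-(π/2))..(π/2), g (η, φ, ψ) ^ 2 * Real.cos φ)
        ≤ 2 * B ^ 2 * Real.exp (-(2 * K₀ * η)) := by
    intro η hη ψ hψ
    have hab : -(π/2) ≤ π/2 := by linarith
    have hmaps : ∀ φ ∈ Icc (-(π/2)) (π/2), ((η, φ, ψ) : ℝ × ℝ × ℝ) ∈ milneDomain L :=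
      fun φ hφ => ⟨hη, hφ, hψ⟩
    have hgc : ContinuousOn (fun φ => g (η, φ, ψ)) (Icc (-(π/2)) (π/2)) :=
      hcont.comp (Continuous.continuousOn (by fun_prop)) hmaps
    have hic : ContinuousOn (fun φ => g (η, φ, ψ) ^ 2 * Real.cos φ) (Icc (-(π/2)) (π/2)) :=
      (hgc.pow 2).mul Real.continuous_cos.continuousOn
    have hint : IntervalIntegrable (fun φ => g (η, φ, ψ) ^ 2 * Real.cos φ)
        volume (-(π/2)) (π/2) := by
      apply ContinuousOn.intervalIntegrable
      rwa [uIcc_of_le hab]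
    constructor
    · refine intervalIntegral.integral_nonneg hab (fun φ hφ => ?_)
      exact mul_nonneg (sq_nonneg _) (Real.cos_nonneg_of_mem_Icc hφ)
    · have hptw : ∀ φ ∈ Icc (-(π/2)) (π/2),
          g (η, φ, ψ) ^ 2 * Real.cos φ
            ≤ (B * Real.exp (-(K₀ * η))) ^ 2 * Real.cos φ := by
        intro φ hφ
        have h1 := hb (η, φ, ψ) (hmaps φ hφ)
        have h2 : g (η, φ, ψ) ^ 2 ≤ (B * Real.exp (-(K₀ * η))) ^ 2 := by
          rw [← sq_abs]
          exact pow_le_pow_left₀ (abs_nonneg _) h1 2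
        exact mul_le_mul_of_nonneg_right h2 (Real.cos_nonneg_of_mem_Icc hφ)
      have hmono := intervalIntegral.integral_mono_on hab hint
        ((by fun_prop : Continuous fun φ : ℝ =>
          (B * Real.exp (-(K₀ * η))) ^ 2 * Real.cos φ).intervalIntegrable _ _) hptw
      have hcalc : (∫ φ in (-(π/2))..(π/2), (B * Real.exp (-(K₀ * η))) ^ 2 * Real.cos φ)
          = 2 * B ^ 2 * Real.exp (-(2 * K₀ * η)) := by
        rw [intervalIntegral.integral_const_mul, integral_cos]
        rw [Real.sin_pi_div_two, Real.sin_neg, Real.sin_pi_div_two]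
        rw [mul_pow, exp_sq]
        ring_nf
      rw [hcalc] at hmono
      exact hmono
  have hstep2 : ∀ η ∈ Icc (0:ℝ) L,
      (0 ≤ ∫ ψ in (-π)..π, ∫ φ in (-(π/2))..(π/2), g (η, φ, ψ) ^ 2 * Real.cos φ) ∧
      (∫ ψ in (-π)..π, ∫ φ in (-(π/2))..(π/2), g (η, φ, ψ) ^ 2 * Real.cos φ)
        ≤ 4 * π * B ^ 2 * Real.exp (-(2 * K₀ * η)) := by
    intro η hη
    have hab : -π ≤ π := by linarith
    have hBe : (0:ℝ) ≤ 4 * π * B ^ 2 * Real.exp (-(2 * K₀ * η)) := by positivity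
    by_cases hInt : IntervalIntegrable
        (fun ψ => ∫ φ in (-(π/2))..(π/2), g (η, φ, ψ) ^ 2 * Real.cos φ) volume (-π) π
    · constructor
      · exact intervalIntegral.integral_nonneg hab (fun ψ hψ => (hstep1 η hη ψ hψ).1)
      · have hmono := intervalIntegral.integral_mono_on hab hInt intervalIntegrable_const
          (fun ψ hψ => (hstep1 η hη ψ hψ).2)
        rw [intervalIntegral.integral_const, smul_eq_mul] at hmono
        calc (∫ ψ in (-π)..π, ∫ φ in (-(π/2))..(π/2), g (η, φ, ψ) ^ 2 * Real.cos φ)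
            ≤ (π - -π) * (2 * B ^ 2 * Real.exp (-(2 * K₀ * η))) := hmono
        _ = 4 * π * B ^ 2 * Real.exp (-(2 * K₀ * η)) := by ring
    · rw [intervalIntegral.integral_undef hInt]
      exact ⟨le_rfl, hBe⟩
  have hstep3 : (∫ η in (0:ℝ)..L, ∫ ψ in (-π)..π, ∫ φ in (-(π/2))..(π/2),
      g (η, φ, ψ) ^ 2 * Real.cos φ) ≤ 2 * π * B ^ 2 / K₀ := by
    have hA : (0:ℝ) ≤ 2 * π * B ^ 2 / K₀ := by positivity
    by_cases hInt : IntervalIntegrable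
        (fun η => ∫ ψ in (-π)..π, ∫ φ in (-(π/2))..(π/2),
          g (η, φ, ψ) ^ 2 * Real.cos φ) volume 0 L
    · have hcont2 : Continuous (fun η : ℝ => 4 * π * B ^ 2 * Real.exp (-(2 * K₀ * η))) := by
        fun_prop
      have hmono := intervalIntegral.integral_mono_on hL.le hInt
        (hcont2.intervalIntegrable 0 L) (fun η hη => (hstep2 η hη).2)
      have hder : ∀ η ∈ uIcc (0:ℝ) L,
          HasDerivAt (fun t : ℝ => -(4 * π * B ^ 2 / (2 * K₀)) * Real.exp (-(2 * K₀ * t)))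
            (4 * π * B ^ 2 * Real.exp (-(2 * K₀ * η))) η := by
        intro η _
        have h1 : HasDerivAt (fun t : ℝ => -(2 * K₀ * t)) (-(2 * K₀)) η := by
          simpa using ((hasDerivAt_id' η).const_mul (2 * K₀)).fun_neg
        have h2 := (Real.hasDerivAt_exp (-(2 * K₀ * η))).comp η h1
        have h3 := h2.const_mul (-(4 * π * B ^ 2 / (2 * K₀)))
        refine h3.congr_deriv ?_
        field_simp
      have hcalc := intervalIntegral.integral_eq_sub_of_hasDerivAt hder
        (hcont2.intervalIntegrable 0 L)
      rw [hcalc] at hmono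
      calc (∫ η in (0:ℝ)..L, ∫ ψ in (-π)..π, ∫ φ in (-(π/2))..(π/2),
            g (η, φ, ψ) ^ 2 * Real.cos φ)
          ≤ -(4 * π * B ^ 2 / (2 * K₀)) * Real.exp (-(2 * K₀ * L))
            - -(4 * π * B ^ 2 / (2 * K₀)) * Real.exp (-(2 * K₀ * 0)) := hmono
      _ ≤ 2 * π * B ^ 2 / K₀ := by
          have he1 : (0:ℝ) < Real.exp (-(2 * K₀ * L)) := Real.exp_pos _
          have he2 : Real.exp (-(2 * K₀ * 0)) = 1 := by norm_num
          rw [he2]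
          have h4 : (0:ℝ) ≤ 4 * π * B ^ 2 / (2 * K₀) := by positivity
          have h5 : 4 * π * B ^ 2 / (2 * K₀) = 2 * π * B ^ 2 / K₀ := by
            field_simp
            ring
          nlinarith
    · rw [intervalIntegral.integral_undef hInt]
      exact hA
  unfold l2Norm
  exact Real.sqrt_le_sqrt hstep3


end Aux

set_option maxHeartbeats 1000000 in
/-- Theorem "Milne theorem 2′": decay for the local ε-Milne problem
(the equation without the nonlocal average term). -/
theorem local_milne_decay (R₁ R₂ n K M : ℝ) (hR₁ : 0 < R₁) (hR₂ : 0 < R₂)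
    (hn : n ∈ Ioo (0 : ℝ) (1 / 2)) (hK : 0 < K) (hM : 0 < M) :
    ∃ ε₀ ∈ Ioo (0 : ℝ) 1, ∃ K₀ ∈ Ioc (0 : ℝ) (min K (1 / 2)), ∃ C > (0 : ℝ),
      ∀ ε ∈ Ioc (0 : ℝ) ε₀, ∀ h : ℝ → ℝ → ℝ, ∀ S W : ℝ × ℝ × ℝ → ℝ,
        ContDiffOn ℝ 1 W (milneDomain (layerL ε n)) →
        (∀ p ∈ interior (milneDomain (layerL ε n)),
          Real.sin p.2.1 * dEta W p
            + force R₁ R₂ ε p.1 p.2.2 * Real.cos p.2.1 * dPhi W p + W p = S p) →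
        (∀ q ∈ inflowSet, W (0, q.1, q.2) = h q.1 q.2) →
        (∀ φ ψ : ℝ, W (layerL ε n, φ, ψ) = W (layerL ε n, -φ, ψ)) →
        (∀ q ∈ inflowSet, |h q.1 q.2| ≤ M) →
        (∀ p ∈ milneDomain (layerL ε n), Real.exp (K * p.1) * |S p| ≤ M) →
        l2Norm (layerL ε n) (fun p => Real.exp (K₀ * p.1) * W p)
          + linfNorm (layerL ε n) (fun p => Real.exp (K₀ * p.1) * W p) ≤ C := by
  have hπ := Real.pi_pos
  have hRmpos : 0 < min R₁ R₂ := lt_min hR₁ hR₂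
  have h1n : 0 < 1 - n := by have := hn.2; linarith
  have hε₀pos : 0 < min (1/2 : ℝ) ((min R₁ R₂ / 2) ^ ((1 - n)⁻¹ : ℝ)) :=
    lt_min (by norm_num) (Real.rpow_pos_of_pos (by positivity) _)
  have hK₁pos : 0 < min K (1/2 : ℝ) := lt_min hK (by norm_num)
  have hK₁le : min K (1/2 : ℝ) ≤ 1/2 := min_le_right _ _
  have hK₀pos : 0 < min K (1/2 : ℝ) / 2 := by positivity
  have hsq : 0 ≤ Real.sqrt (2 * π * (2 * M) ^ 2 / (min K (1/2 : ℝ) / 2)) := Real.sqrt_nonneg _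
  refine ⟨min (1/2 : ℝ) ((min R₁ R₂ / 2) ^ ((1 - n)⁻¹ : ℝ)),
    ⟨hε₀pos, lt_of_le_of_lt (min_le_left _ _) (by norm_num)⟩,
    min K (1/2 : ℝ) / 2, ⟨hK₀pos, by linarith⟩,
    2 * M + Real.sqrt (2 * π * (2 * M) ^ 2 / (min K (1/2 : ℝ) / 2)) + 1,
    by nlinarith, ?_⟩
  intro ε hε h S W hWc heq hinW hrf hhb hSb
  set K₁ : ℝ := min K (1/2 : ℝ) with hK₁def
  set K₀ : ℝ := K₁ / 2 with hK₀def
  set L := layerL ε n with hLdef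
  have hεpos : 0 < ε := hε.1
  have hLpos : 0 < L := Real.rpow_pos_of_pos hεpos _
  have hεL : ε * L = ε ^ (1 - n) := by
    rw [hLdef]
    unfold layerL
    calc ε * ε ^ (-n) = ε ^ (1:ℝ) * ε ^ (-n) := by rw [Real.rpow_one]
    _ = ε ^ (1 + -n) := (Real.rpow_add hεpos 1 (-n)).symm
    _ = ε ^ (1 - n) := by ring_nf
  have hεLb : ε * L ≤ min R₁ R₂ / 2 := by
    rw [hεL]
    calc ε ^ (1 - n) ≤ (min (1/2 : ℝ) ((min R₁ R₂ / 2) ^ ((1 - n)⁻¹ : ℝ))) ^ (1 - n) :=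
        Real.rpow_le_rpow hεpos.le hε.2 h1n.le
    _ ≤ ((min R₁ R₂ / 2) ^ ((1 - n)⁻¹ : ℝ)) ^ (1 - n) :=
        Real.rpow_le_rpow hε₀pos.le (min_le_right _ _) h1n.le
    _ = min R₁ R₂ / 2 := by
        rw [← Real.rpow_mul (by positivity), inv_mul_cancel₀ (ne_of_gt h1n), Real.rpow_one]
  have hd1 : ∀ η ∈ Icc (0:ℝ) L, 0 < R₁ - ε * η := by
    intro η hη
    have h1 : ε * η ≤ ε * L := mul_le_mul_of_nonneg_left hη.2 hεpos.le
    have h2 : min R₁ R₂ ≤ R₁ := min_le_left _ _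
    linarith
  have hd2 : ∀ η ∈ Icc (0:ℝ) L, 0 < R₂ - ε * η := by
    intro η hη
    have h1 : ε * η ≤ ε * L := mul_le_mul_of_nonneg_left hη.2 hεpos.le
    have h2 : min R₁ R₂ ≤ R₂ := min_le_right _ _
    linarith
  have hSb' : ∀ p ∈ milneDomain L, |S p| ≤ M * Real.exp (-(K₁ * p.1)) := by
    intro p hp
    have h1 := hSb p hp
    have hp1 : 0 ≤ p.1 := hp.1.1
    have h3 : |S p| ≤ M * Real.exp (-(K * p.1)) := by
      have h4 := mul_le_mul_of_nonneg_left h1 (Real.exp_pos (-(K * p.1))).le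
      rw [← mul_assoc, ← Real.exp_add] at h4
      simp only [neg_add_cancel, Real.exp_zero, one_mul] at h4
      linarith [h4, mul_comm (Real.exp (-(K * p.1))) M]
    have h5 : Real.exp (-(K * p.1)) ≤ Real.exp (-(K₁ * p.1)) := by
      apply Real.exp_le_exp.mpr
      have h6 : K₁ * p.1 ≤ K * p.1 := mul_le_mul_of_nonneg_right (min_le_left _ _) hp1
      linarith
    calc |S p| ≤ M * Real.exp (-(K * p.1)) := h3
    _ ≤ M * Real.exp (-(K₁ * p.1)) := mul_le_mul_of_nonneg_left h5 hM.le
  have hbW := milne_max_principle R₁ R₂ ε L K₁ M hεpos hLpos hd1 hd2 hK₁pos hK₁le hM.le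
    h S W hWc heq hinW hrf hhb hSb'
  have heqn' : ∀ p ∈ interior (milneDomain L),
      Real.sin p.2.1 * dEta (fun q => -(W q)) p
        + force R₁ R₂ ε p.1 p.2.2 * Real.cos p.2.1 * dPhi (fun q => -(W q)) p
        + (fun q => -(W q)) p = (fun q => -(S q)) p := by
    intro p hp
    have e1 : dEta (fun q => -(W q)) p = -(dEta W p) := by
      simp [dEta]
    have e2 : dPhi (fun q => -(W q)) p = -(dPhi W p) := by
      simp [dPhi]
    simp only [e1, e2]
    linear_combination -(heq p hp)
  have hbWn := milne_max_principle R₁ R₂ ε L K₁ M hεpos hLpos hd1 hd2 hK₁pos hK₁le hM.le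
    (fun x y => -(h x y)) (fun q => -(S q)) (fun q => -(W q)) hWc.neg heqn'
    (fun q hq => by rw [hinW q hq])
    (fun φ ψ => by rw [hrf φ ψ])
    (fun q hq => by simp only [abs_neg]; exact hhb q hq)
    (fun p hp => by simp only [abs_neg]; exact hSb' p hp)
  have habs : ∀ p ∈ milneDomain L, Real.exp (K₁ * p.1) * |W p| ≤ 2 * M := by
    intro p hp
    rcases abs_cases (W p) with ⟨he, _⟩ | ⟨he, _⟩
    · rw [he]; exact hbW p hp
    · rw [he]; exact hbWn p hp
  have hptw : ∀ p ∈ milneDomain L,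
      |Real.exp (K₀ * p.1) * W p| ≤ 2 * M * Real.exp (-(K₀ * p.1)) := by
    intro p hp
    have hp1 : 0 ≤ p.1 := hp.1.1
    rw [abs_mul, Real.abs_exp]
    have h1 := habs p hp
    have hid : Real.exp (K₀ * p.1) = Real.exp (K₁ * p.1) * Real.exp (-(K₀ * p.1)) := by
      rw [← Real.exp_add]
      congr 1
      rw [hK₀def]
      ring
    rw [hid]
    have h2 := mul_le_mul_of_nonneg_right h1 (Real.exp_pos (-(K₀ * p.1))).le
    nlinarith [h2]
  have hg'cont : ContinuousOn (fun p : ℝ × ℝ × ℝ => Real.exp (K₀ * p.1) * W p)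
      (milneDomain L) :=
    ((Real.continuous_exp.comp (continuous_const.mul continuous_fst)).continuousOn).mul
      hWc.continuousOn
  have hlinf : linfNorm L (fun p => Real.exp (K₀ * p.1) * W p) ≤ 2 * M := by
    refine linf_aux L (2 * M) (by linarith) _ (fun p hp => ?_)
    have h1 := hptw p hp
    have h2 : Real.exp (-(K₀ * p.1)) ≤ 1 :=
      Real.exp_le_one_iff.mpr (by nlinarith [hp.1.1])
    nlinarith
  have hl2 : l2Norm L (fun p => Real.exp (K₀ * p.1) * W p)
      ≤ Real.sqrt (2 * π * (2 * M) ^ 2 / K₀) :=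
    l2_aux L (2 * M) K₀ hLpos hK₀pos (by linarith) _ hg'cont hptw
  linarith


end MilneStmt
end
end

section
/- Weighted energy identity (identity (mt 02) in the proof of the L² estimate): Let ε ∈ (0,1) satisfy ε^(1−n) < R_min, and let f be a classical solution of the ε-Milne problem with geometric correction with continuous source S and arbitrary in-flow data. Then for every η ∈ (0,L): (1/2) d/dη ⟨f, f sin φ⟩(η) + F̃(η) ⟨f, f sin φ⟩(η) = −⟨f − f̄, f − f̄⟩(η) − G(η) ⟨f cos²ψ, f sin φ⟩(η) + ⟨S, f⟩(η). -/
noncomputable section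

open Real Set MeasureTheory

namespace MilneStmt

/-- The angular pairing `⟨a, b⟩(η) = ∫∫ a b cos φ dφ dψ`. -/
def brkt (a b : ℝ × ℝ × ℝ → ℝ) (η : ℝ) : ℝ :=
  ∫ ψ in (-π)..π, ∫ φ in (-(π / 2))..(π / 2), a (η, φ, ψ) * b (η, φ, ψ) * Real.cos φ

/-- `F̃(η) = -ε/(R₁ - εη)`. -/
def Ftilde (R₁ ε η : ℝ) : ℝ := -ε / (R₁ - ε * η)

/-- `G(η) = -ε(R₁ - R₂)/((R₁ - εη)(R₂ - εη))`. -/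
def Gfun (R₁ R₂ ε η : ℝ) : ℝ := -(ε * (R₁ - R₂)) / ((R₁ - ε * η) * (R₂ - ε * η))


/-! ### Auxiliary material for the energy identity -/

def angSq : Set (ℝ × ℝ) := Ioo (-π) π ×ˢ Ioo (-(π/2)) (π/2)

def angR : Set (ℝ × ℝ) := Icc (-π) π ×ˢ Icc (-(π/2)) (π/2)

lemma angSq_meas : MeasurableSet angSq := measurableSet_Ioo.prod measurableSet_Ioo

lemma angSq_sub_angR : angSq ⊆ angR :=
  prod_mono Ioo_subset_Icc_self Ioo_subset_Icc_self

lemma integrableOn_angSq {s : ℝ × ℝ → ℝ} (hs : ContinuousOn s angR) :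
    IntegrableOn s angSq :=
  (hs.integrableOn_compact (isCompact_Icc.prod isCompact_Icc)).mono_set angSq_sub_angR

lemma fubini_ang (s : ℝ × ℝ → ℝ) (hs : ContinuousOn s angR) :
    (∫ ψ in (-π)..π, ∫ φ in (-(π/2))..(π/2), s (ψ, φ)) = ∫ a in angSq, s a := by
  have h1 : IntegrableOn s (Ioc (-π) π ×ˢ Ioc (-(π/2)) (π/2)) :=
    (hs.integrableOn_compact (isCompact_Icc.prod isCompact_Icc)).mono_set
      (prod_mono Ioc_subset_Icc_self Ioc_subset_Icc_self)
  have hππ : (-π : ℝ) ≤ π := by linarith [pi_pos]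
  have hππ2 : (-(π/2) : ℝ) ≤ π/2 := by linarith [pi_pos]
  have key := setIntegral_prod (μ := (volume : Measure ℝ)) (ν := (volume : Measure ℝ)) s
    (by rwa [← Measure.volume_eq_prod])
  rw [← Measure.volume_eq_prod] at key
  have hres : (volume : Measure (ℝ × ℝ)).restrict angSq
      = (volume : Measure (ℝ × ℝ)).restrict (Ioc (-π) π ×ˢ Ioc (-(π/2)) (π/2)) := by
    unfold angSq
    rw [Measure.volume_eq_prod, ← Measure.prod_restrict, ← Measure.prod_restrict,
        Measure.restrict_congr_set Ioo_ae_eq_Ioc, Measure.restrict_congr_set Ioo_ae_eq_Ioc]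
  rw [intervalIntegral.integral_of_le hππ]
  simp_rw [intervalIntegral.integral_of_le hππ2]
  rw [← key]
  exact (by rw [hres] : (∫ a in angSq, s a) = _).symm

lemma iter_ang (s : ℝ × ℝ → ℝ) (hs : IntegrableOn s angSq) :
    (∫ a in angSq, s a)
      = ∫ ψ in Ioo (-π) π, ∫ φ in Ioo (-(π/2)) (π/2), s (ψ, φ) := by
  unfold angSq at hs ⊢
  rw [Measure.volume_eq_prod]
  exact setIntegral_prod s (by rwa [← Measure.volume_eq_prod])


set_option maxHeartbeats 1000000 in
private theorem milne_energy_identity_aux (R₁ R₂ n ε : ℝ) (hR₁ : 0 < R₁) (hR₂ : 0 < R₂)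
    (hn : n ∈ Ioo (0 : ℝ) (1 / 2)) (hε : ε ∈ Ioo (0 : ℝ) 1)
    (hεn : ε ^ (1 - n) < min R₁ R₂)
    (S f : ℝ × ℝ × ℝ → ℝ)
    (hS : ContinuousOn S (milneDomain (layerL ε n)))
    (hsm : ContDiffOn ℝ 1 f (milneDomain (layerL ε n)))
    (heqn : ∀ p ∈ interior (milneDomain (layerL ε n)),
      Real.sin p.2.1 * deriv (fun t => f (t, p.2.1, p.2.2)) p.1
        + force R₁ R₂ ε p.1 p.2.2 * Real.cos p.2.1 * deriv (fun t => f (p.1, t, p.2.2)) p.2.1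
        + f p - angAvg f p.1 = S p) :
    ∀ η ∈ Ioo (0 : ℝ) (layerL ε n),
      (1 / 2) * deriv (brkt f (fun p => f p * Real.sin p.2.1)) η
          + Ftilde R₁ ε η * brkt f (fun p => f p * Real.sin p.2.1) η
        = -brkt (fun p => f p - angAvg f p.1) (fun p => f p - angAvg f p.1) η
          - Gfun R₁ R₂ ε η * brkt (fun p => f p * Real.cos p.2.2 ^ 2)
              (fun p => f p * Real.sin p.2.1) η
          + brkt S f η := by
  intro η₀ hη₀
  have hπ := pi_pos
  set L := layerL ε n with hLdef
  set D := milneDomain L with hDdef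
  have hL0 : 0 < L := Real.rpow_pos_of_pos hε.1 _
  have hεL : ε * L = ε ^ (1 - n) := by
    have h := (Real.rpow_add hε.1 1 (-n)).symm
    rw [hLdef]; unfold layerL
    simpa [Real.rpow_one, sub_eq_add_neg] using h
  have hden : ∀ η' ∈ Icc (0:ℝ) L, 0 < R₁ - ε * η' ∧ 0 < R₂ - ε * η' := by
    intro η' hη'
    have h1 : ε * η' ≤ ε * L := mul_le_mul_of_nonneg_left hη'.2 hε.1.le
    have h2 : ε * L < min R₁ R₂ := by rw [hεL]; exact hεn
    constructor
    · have := min_le_left R₁ R₂; linarith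
    · have := min_le_right R₁ R₂; linarith
  have hintD : interior D = Ioo 0 L ×ˢ Ioo (-(π/2)) (π/2) ×ˢ Ioo (-π) π := by
    rw [hDdef]; unfold milneDomain
    rw [interior_prod_eq, interior_prod_eq, interior_Icc, interior_Icc, interior_Icc]
  have huD : UniqueDiffOn ℝ D :=
    (uniqueDiffOn_Icc hL0).prod
      ((uniqueDiffOn_Icc (by linarith)).prod (uniqueDiffOn_Icc (by linarith)))
  have hfc : ContinuousOn f D := hsm.continuousOn
  set g' := fderivWithin ℝ f D with hg'def
  have hg'c : ContinuousOn g' D := hsm.continuousOn_fderivWithin huD le_rfl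
  have hDcp : IsCompact D := isCompact_Icc.prod (isCompact_Icc.prod isCompact_Icc)
  obtain ⟨C₀, hC₀⟩ := hDcp.exists_bound_of_continuousOn hfc
  obtain ⟨C₁, hC₁⟩ := hDcp.exists_bound_of_continuousOn hg'c
  have h0D : ((0:ℝ),(0:ℝ),(0:ℝ)) ∈ D := by
    simp only [hDdef, milneDomain, mem_prod, mem_Icc]
    refine ⟨⟨le_rfl, hL0.le⟩, ⟨by linarith, by linarith⟩, by linarith, by linarith⟩
  have hC₀0 : 0 ≤ C₀ := le_trans (norm_nonneg _) (hC₀ _ h0D)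
  have hC₁0 : 0 ≤ C₁ := le_trans (norm_nonneg _) (hC₁ _ h0D)
  -- differentiability at interior points
  have hfd : ∀ p ∈ interior D, HasFDerivAt f (g' p) p := by
    intro p hp
    have hnh : D ∈ nhds p := mem_interior_iff_mem_nhds.1 hp
    have hd := (hsm.differentiableOn one_ne_zero).differentiableAt hnh
    rw [hg'def, fderivWithin_of_mem_nhds hnh]
    exact hd.hasFDerivAt
  have hEta : ∀ η' φ' ψ' : ℝ, (η',φ',ψ') ∈ interior D →
      HasDerivAt (fun t => f (t, φ', ψ')) (g' (η',φ',ψ') (1,0,0)) η' := by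
    intro η' φ' ψ' hp
    have hc : HasDerivAt (fun t : ℝ => (t, φ', ψ')) ((1:ℝ),(0:ℝ),(0:ℝ)) η' :=
      HasDerivAt.prodMk (hasDerivAt_id η') (hasDerivAt_const _ _)
    exact (hfd _ hp).comp_hasDerivAt η' hc
  have hPhi : ∀ η' φ' ψ' : ℝ, (η',φ',ψ') ∈ interior D →
      HasDerivAt (fun u => f (η', u, ψ')) (g' (η',φ',ψ') (0,1,0)) φ' := by
    intro η' φ' ψ' hp
    have hc : HasDerivAt (fun u : ℝ => (η', u, ψ')) ((0:ℝ),(1:ℝ),(0:ℝ)) φ' :=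
      HasDerivAt.prodMk (hasDerivAt_const _ _) (HasDerivAt.prodMk (hasDerivAt_id φ') (hasDerivAt_const _ _))
    exact (hfd _ hp).comp_hasDerivAt φ' hc
  have hPDE : ∀ η' φ' ψ' : ℝ, (η',φ',ψ') ∈ interior D →
      Real.sin φ' * g' (η',φ',ψ') (1,0,0)
        + force R₁ R₂ ε η' ψ' * Real.cos φ' * g' (η',φ',ψ') (0,1,0)
        + f (η',φ',ψ') - angAvg f η' = S (η',φ',ψ') := by
    intro η' φ' ψ' hp
    have e3 := heqn (η',φ',ψ') hp
    rw [show deriv (fun t => f (t, φ', ψ')) η' = g' (η',φ',ψ') (1,0,0) from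
          (hEta η' φ' ψ' hp).deriv,
        show deriv (fun u => f (η', u, ψ')) φ' = g' (η',φ',ψ') (0,1,0) from
          (hPhi η' φ' ψ' hp).deriv] at e3
    exact e3
  -- slice continuity helpers
  have hmapD : ∀ η' ∈ Icc (0:ℝ) L, MapsTo (fun a : ℝ×ℝ => (η', a.2, a.1)) angR D := by
    intro η' hη' a ha
    simp only [hDdef, milneDomain, mem_prod, mem_Icc]
    exact ⟨⟨hη'.1, hη'.2⟩, ⟨ha.2.1, ha.2.2⟩, ha.1.1, ha.1.2⟩
  have hfs : ∀ η' ∈ Icc (0:ℝ) L, ContinuousOn (fun a : ℝ×ℝ => f (η', a.2, a.1)) angR :=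
    fun η' h => hfc.comp
      (continuous_const.prodMk (continuous_snd.prodMk continuous_fst)).continuousOn
      (hmapD η' h)
  have hgs : ∀ η' ∈ Icc (0:ℝ) L, ∀ v : ℝ×ℝ×ℝ,
      ContinuousOn (fun a : ℝ×ℝ => g' (η', a.2, a.1) v) angR :=
    fun η' h v => (ContinuousLinearMap.apply ℝ ℝ v).continuous.comp_continuousOn
      (hg'c.comp
        (continuous_const.prodMk (continuous_snd.prodMk continuous_fst)).continuousOn
        (hmapD η' h))
  have hcosc : ContinuousOn (fun a : ℝ×ℝ => Real.cos a.2) angR :=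
    (continuous_cos.comp continuous_snd).continuousOn
  have hsinc : ContinuousOn (fun a : ℝ×ℝ => Real.sin a.2) angR :=
    (continuous_sin.comp continuous_snd).continuousOn
  have hcos1 : ContinuousOn (fun a : ℝ×ℝ => Real.cos a.1) angR :=
    (continuous_cos.comp continuous_fst).continuousOn
  have hη₀Icc : η₀ ∈ Icc (0:ℝ) L := ⟨hη₀.1.le, hη₀.2.le⟩
  -- the ball around η₀
  set r := min η₀ (L - η₀) with hrdef
  have hr0 : 0 < r := lt_min hη₀.1 (by linarith [hη₀.2])
  have hball : Metric.ball η₀ r ⊆ Ioo 0 L := by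
    intro x hx; rw [Real.ball_eq_Ioo] at hx
    have h1 := min_le_left η₀ (L - η₀); have h2 := min_le_right η₀ (L - η₀)
    exact ⟨by linarith [hx.1], by linarith [hx.2]⟩
  set FF : ℝ → ℝ×ℝ → ℝ :=
    fun t a => f (t, a.2, a.1) * (f (t, a.2, a.1) * Real.sin a.2) * Real.cos a.2 with hFFdef
  set FF' : ℝ → ℝ×ℝ → ℝ :=
    fun t a => 2 * f (t, a.2, a.1) * g' (t, a.2, a.1) (1,0,0)
      * (Real.sin a.2 * Real.cos a.2) with hFF'def
  have hmemint : ∀ t ∈ Metric.ball η₀ r, ∀ a ∈ angSq, (t, a.2, a.1) ∈ interior D := by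
    intro t ht a ha; rw [hintD]; exact ⟨hball ht, ha.2, ha.1⟩
  have hFFcont : ∀ t ∈ Icc (0:ℝ) L, ContinuousOn (FF t) angR := by
    intro t ht
    exact ((hfs t ht).mul ((hfs t ht).mul hsinc)).mul hcosc
  have hFF'cont : ∀ t ∈ Icc (0:ℝ) L, ContinuousOn (FF' t) angR := by
    intro t ht
    exact ((continuousOn_const.mul (hfs t ht)).mul (hgs t ht _)).mul (hsinc.mul hcosc)
  have hFmeas : ∀ᶠ t in nhds η₀, AEStronglyMeasurable (FF t) (volume.restrict angSq) := by
    filter_upwards [Metric.ball_mem_nhds η₀ hr0] with t ht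
    have htIcc : t ∈ Icc (0:ℝ) L := ⟨(hball ht).1.le, (hball ht).2.le⟩
    exact ((hFFcont t htIcc).mono angSq_sub_angR).aestronglyMeasurable angSq_meas
  have hFint : Integrable (FF η₀) (volume.restrict angSq) :=
    integrableOn_angSq (hFFcont η₀ hη₀Icc)
  have hF'meas : AEStronglyMeasurable (FF' η₀) (volume.restrict angSq) :=
    ((hFF'cont η₀ hη₀Icc).mono angSq_sub_angR).aestronglyMeasurable angSq_meas
  have hfinQ : volume angSq < ⊤ :=
    lt_of_le_of_lt (measure_mono angSq_sub_angR)
      (isCompact_Icc.prod isCompact_Icc).measure_lt_top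
  have hbnd_int : Integrable (fun _ : ℝ×ℝ => 2 * C₀ * C₁) (volume.restrict angSq) :=
    integrableOn_const hfinQ.ne
  have hnorm1 : ‖((1:ℝ),(0:ℝ),(0:ℝ))‖ = 1 := by
    simp [Prod.norm_def]
  have h_bound : ∀ᵐ a ∂(volume.restrict angSq), ∀ t ∈ Metric.ball η₀ r,
      ‖FF' t a‖ ≤ (fun _ : ℝ×ℝ => 2 * C₀ * C₁) a := by
    filter_upwards [ae_restrict_mem angSq_meas] with a ha t ht
    have hp : (t, a.2, a.1) ∈ interior D := hmemint t ht a ha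
    have hpD : (t, a.2, a.1) ∈ D := interior_subset hp
    have h1 : |f (t,a.2,a.1)| ≤ C₀ := hC₀ _ hpD
    have h2 : |g' (t,a.2,a.1) (1,0,0)| ≤ C₁ := by
      calc |g' (t,a.2,a.1) (1,0,0)| = ‖g' (t,a.2,a.1) (1,0,0)‖ := (Real.norm_eq_abs _).symm
        _ ≤ ‖g' (t,a.2,a.1)‖ * ‖((1:ℝ),(0:ℝ),(0:ℝ))‖ := ContinuousLinearMap.le_opNorm _ _
        _ = ‖g' (t,a.2,a.1)‖ := by rw [hnorm1, mul_one]
        _ ≤ C₁ := hC₁ _ hpD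
    have hs1 : |Real.sin a.2 * Real.cos a.2| ≤ 1 := by
      rw [abs_mul]
      exact mul_le_one₀ (abs_sin_le_one _) (abs_nonneg _) (abs_cos_le_one _)
    simp only [hFF'def, Real.norm_eq_abs]
    calc |2 * f (t,a.2,a.1) * g' (t,a.2,a.1) (1,0,0) * (Real.sin a.2 * Real.cos a.2)|
        = 2 * |f (t,a.2,a.1)| * |g' (t,a.2,a.1) (1,0,0)| * |Real.sin a.2 * Real.cos a.2| := by
          rw [abs_mul, abs_mul, abs_mul, abs_two]
      _ ≤ 2 * C₀ * C₁ * 1 := by gcongr <;> positivity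
      _ = 2 * C₀ * C₁ := mul_one _
  have h_diff : ∀ᵐ a ∂(volume.restrict angSq), ∀ t ∈ Metric.ball η₀ r,
      HasDerivAt (fun t' => FF t' a) (FF' t a) t := by
    filter_upwards [ae_restrict_mem angSq_meas] with a ha t ht
    have hp := hmemint t ht a ha
    have hu := hEta t a.2 a.1 hp
    have hh := (hu.mul (hu.mul_const (Real.sin a.2))).mul_const (Real.cos a.2)
    simp only [hFFdef, hFF'def]
    refine hh.congr_deriv ?_
    ring
  have key := hasDerivAt_integral_of_dominated_loc_of_deriv_le (Metric.ball_mem_nhds η₀ hr0) hFmeas hFint hF'meas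
    h_bound hbnd_int h_diff
  have hBfun : ∀ t ∈ Ioo (0:ℝ) L, brkt f (fun p => f p * Real.sin p.2.1) t
      = ∫ a in angSq, FF t a := by
    intro t ht
    have htIcc : t ∈ Icc (0:ℝ) L := ⟨ht.1.le, ht.2.le⟩
    exact fubini_ang (FF t) (hFFcont t htIcc)
  have hderiv_eq : deriv (brkt f (fun p => f p * Real.sin p.2.1)) η₀
      = ∫ a in angSq, FF' η₀ a := by
    have heq : brkt f (fun p => f p * Real.sin p.2.1)
        =ᶠ[nhds η₀] (fun t => ∫ a in angSq, FF t a) := by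
      filter_upwards [Ioo_mem_nhds hη₀.1 hη₀.2] with t ht using hBfun t ht
    rw [heq.deriv_eq]
    exact key.2.deriv
  -- ### pointwise use of the PDE
  have hden₀ := hden η₀ hη₀Icc
  have hforceC : ContinuousOn (fun a : ℝ×ℝ => force R₁ R₂ ε η₀ a.1) angR := by
    have hc : Continuous (fun ψ : ℝ => force R₁ R₂ ε η₀ ψ) := by
      unfold force
      exact continuous_const.mul
        (((continuous_sin.pow 2).div_const _).add ((continuous_cos.pow 2).div_const _))
    exact (hc.comp continuous_fst).continuousOn
  have hstep1 : (∫ a in angSq, FF' η₀ a)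
      = ∫ a in angSq,
          (2 * (S (η₀,a.2,a.1) * f (η₀,a.2,a.1) * Real.cos a.2)
           - 2 * ((f (η₀,a.2,a.1) - angAvg f η₀) * (f (η₀,a.2,a.1) - angAvg f η₀)
                  * Real.cos a.2)
           - 2 * (angAvg f η₀ * ((f (η₀,a.2,a.1) - angAvg f η₀) * Real.cos a.2))
           - 2 * (force R₁ R₂ ε η₀ a.1 * (f (η₀,a.2,a.1) * g' (η₀,a.2,a.1) (0,1,0))
                  * Real.cos a.2 ^ 2)) := by
    apply setIntegral_congr_fun angSq_meas
    intro a ha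
    have hp : (η₀, a.2, a.1) ∈ interior D := by rw [hintD]; exact ⟨hη₀, ha.2, ha.1⟩
    have hpde := hPDE η₀ a.2 a.1 hp
    simp only [hFF'def]
    linear_combination (2 * f (η₀,a.2,a.1) * Real.cos a.2) * hpde
  -- integrability of the four pieces
  have hSsl : ContinuousOn (fun a : ℝ×ℝ => S (η₀,a.2,a.1)) angR :=
    hS.comp (continuous_const.prodMk (continuous_snd.prodMk continuous_fst)).continuousOn
      (hmapD η₀ hη₀Icc)
  have hfηc := hfs η₀ hη₀Icc
  have iS_int : IntegrableOn
      (fun a : ℝ×ℝ => S (η₀,a.2,a.1) * f (η₀,a.2,a.1) * Real.cos a.2) angSq :=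
    integrableOn_angSq ((hSsl.mul hfηc).mul hcosc)
  have iZ_int : IntegrableOn
      (fun a : ℝ×ℝ => (f (η₀,a.2,a.1) - angAvg f η₀) * (f (η₀,a.2,a.1) - angAvg f η₀)
        * Real.cos a.2) angSq :=
    integrableOn_angSq (((hfηc.sub continuousOn_const).mul (hfηc.sub continuousOn_const)).mul
      hcosc)
  have iA_int : IntegrableOn
      (fun a : ℝ×ℝ => (f (η₀,a.2,a.1) - angAvg f η₀) * Real.cos a.2) angSq :=
    integrableOn_angSq ((hfηc.sub continuousOn_const).mul hcosc)
  have iC_int : IntegrableOn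
      (fun a : ℝ×ℝ => force R₁ R₂ ε η₀ a.1 * (f (η₀,a.2,a.1) * g' (η₀,a.2,a.1) (0,1,0))
        * Real.cos a.2 ^ 2) angSq :=
    integrableOn_angSq ((hforceC.mul (hfηc.mul (hgs η₀ hη₀Icc _))).mul (hcosc.pow 2))
  have hIsplit : (∫ a in angSq, FF' η₀ a)
      = 2 * (∫ a in angSq, S (η₀,a.2,a.1) * f (η₀,a.2,a.1) * Real.cos a.2)
        - 2 * (∫ a in angSq, (f (η₀,a.2,a.1) - angAvg f η₀) * (f (η₀,a.2,a.1) - angAvg f η₀)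
              * Real.cos a.2)
        - 2 * (angAvg f η₀ * ∫ a in angSq, (f (η₀,a.2,a.1) - angAvg f η₀) * Real.cos a.2)
        - 2 * (∫ a in angSq, force R₁ R₂ ε η₀ a.1
              * (f (η₀,a.2,a.1) * g' (η₀,a.2,a.1) (0,1,0)) * Real.cos a.2 ^ 2) := by
    rw [hstep1]
    have i1 := iS_int.const_mul (2:ℝ)
    have i2 := iZ_int.const_mul (2:ℝ)
    have i3' : IntegrableOn
        (fun a : ℝ×ℝ => angAvg f η₀ * ((f (η₀,a.2,a.1) - angAvg f η₀) * Real.cos a.2))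
        angSq := iA_int.const_mul _
    have i3 := i3'.const_mul (2:ℝ)
    have i4 := iC_int.const_mul (2:ℝ)
    have eA : (∫ a in angSq,
          (2 * (S (η₀,a.2,a.1) * f (η₀,a.2,a.1) * Real.cos a.2)
           - 2 * ((f (η₀,a.2,a.1) - angAvg f η₀) * (f (η₀,a.2,a.1) - angAvg f η₀)
                  * Real.cos a.2)))
        = (∫ a in angSq, 2 * (S (η₀,a.2,a.1) * f (η₀,a.2,a.1) * Real.cos a.2))
          - ∫ a in angSq, 2 * ((f (η₀,a.2,a.1) - angAvg f η₀)
              * (f (η₀,a.2,a.1) - angAvg f η₀) * Real.cos a.2) := integral_sub i1 i2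
    have eB : (∫ a in angSq,
          (2 * (S (η₀,a.2,a.1) * f (η₀,a.2,a.1) * Real.cos a.2)
           - 2 * ((f (η₀,a.2,a.1) - angAvg f η₀) * (f (η₀,a.2,a.1) - angAvg f η₀)
                  * Real.cos a.2)
           - 2 * (angAvg f η₀ * ((f (η₀,a.2,a.1) - angAvg f η₀) * Real.cos a.2))))
        = (∫ a in angSq,
            (2 * (S (η₀,a.2,a.1) * f (η₀,a.2,a.1) * Real.cos a.2)
             - 2 * ((f (η₀,a.2,a.1) - angAvg f η₀) * (f (η₀,a.2,a.1) - angAvg f η₀)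
                    * Real.cos a.2)))
          - ∫ a in angSq, 2 * (angAvg f η₀ * ((f (η₀,a.2,a.1) - angAvg f η₀)
              * Real.cos a.2)) := integral_sub (i1.sub i2) i3
    have eC : (∫ a in angSq,
          (2 * (S (η₀,a.2,a.1) * f (η₀,a.2,a.1) * Real.cos a.2)
           - 2 * ((f (η₀,a.2,a.1) - angAvg f η₀) * (f (η₀,a.2,a.1) - angAvg f η₀)
                  * Real.cos a.2)
           - 2 * (angAvg f η₀ * ((f (η₀,a.2,a.1) - angAvg f η₀) * Real.cos a.2))
           - 2 * (force R₁ R₂ ε η₀ a.1 * (f (η₀,a.2,a.1) * g' (η₀,a.2,a.1) (0,1,0))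
                  * Real.cos a.2 ^ 2)))
        = (∫ a in angSq,
            (2 * (S (η₀,a.2,a.1) * f (η₀,a.2,a.1) * Real.cos a.2)
             - 2 * ((f (η₀,a.2,a.1) - angAvg f η₀) * (f (η₀,a.2,a.1) - angAvg f η₀)
                    * Real.cos a.2)
             - 2 * (angAvg f η₀ * ((f (η₀,a.2,a.1) - angAvg f η₀) * Real.cos a.2))))
          - ∫ a in angSq, 2 * (force R₁ R₂ ε η₀ a.1
              * (f (η₀,a.2,a.1) * g' (η₀,a.2,a.1) (0,1,0)) * Real.cos a.2 ^ 2) :=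
      integral_sub ((i1.sub i2).sub i3) i4
    rw [eC, eB, eA, integral_const_mul, integral_const_mul, integral_const_mul,
        integral_const_mul, integral_const_mul]
  -- term S
  have hIS : (∫ a in angSq, S (η₀,a.2,a.1) * f (η₀,a.2,a.1) * Real.cos a.2)
      = brkt S f η₀ :=
    (fubini_ang _ ((hSsl.mul hfηc).mul hcosc)).symm
  -- term Z
  have hIZ : (∫ a in angSq, (f (η₀,a.2,a.1) - angAvg f η₀) * (f (η₀,a.2,a.1) - angAvg f η₀)
        * Real.cos a.2)
      = brkt (fun p => f p - angAvg f p.1) (fun p => f p - angAvg f p.1) η₀ :=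
    (fubini_ang _ (((hfηc.sub continuousOn_const).mul (hfηc.sub continuousOn_const)).mul
      hcosc)).symm
  -- term A vanishes
  have h4π : (∫ a in angSq, Real.cos a.2) = 4 * π := by
    rw [← fubini_ang _ hcosc]
    simp
    ring
  have hfcosint : (∫ a in angSq, f (η₀,a.2,a.1) * Real.cos a.2) = 4 * π * angAvg f η₀ := by
    have h := fubini_ang (fun a : ℝ×ℝ => f (η₀,a.2,a.1) * Real.cos a.2) (hfηc.mul hcosc)
    have h2 : angAvg f η₀
        = 1/(4*π) * (∫ a in angSq, f (η₀,a.2,a.1) * Real.cos a.2) := by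
      rw [← h]; rfl
    rw [h2]; field_simp
  have hIA : (∫ a in angSq, (f (η₀,a.2,a.1) - angAvg f η₀) * Real.cos a.2) = 0 := by
    have hsub : (∫ a in angSq, (f (η₀,a.2,a.1) - angAvg f η₀) * Real.cos a.2)
        = (∫ a in angSq, f (η₀,a.2,a.1) * Real.cos a.2)
          - ∫ a in angSq, angAvg f η₀ * Real.cos a.2 := by
      rw [← integral_sub (integrableOn_angSq (hfηc.mul hcosc) :
          IntegrableOn (fun a : ℝ×ℝ => f (η₀,a.2,a.1) * Real.cos a.2) angSq volume)
        (integrableOn_angSq (continuousOn_const.mul hcosc) :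
          IntegrableOn (fun a : ℝ×ℝ => angAvg f η₀ * Real.cos a.2) angSq volume)]
      apply setIntegral_congr_fun angSq_meas
      intro a _; ring
    rw [hsub, hfcosint, integral_const_mul, h4π]
    ring
  -- term C : integration by parts in φ
  have hforce_split : ∀ ψ : ℝ, force R₁ R₂ ε η₀ ψ
      = Ftilde R₁ ε η₀ + Gfun R₁ R₂ ε η₀ * Real.cos ψ ^ 2 := by
    intro ψ
    have h1 : R₁ - ε*η₀ ≠ 0 := ne_of_gt hden₀.1
    have h2 : R₂ - ε*η₀ ≠ 0 := ne_of_gt hden₀.2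
    have hsc := Real.sin_sq_add_cos_sq ψ
    have hs2 : Real.sin ψ ^ 2 = 1 - Real.cos ψ ^ 2 := by linarith
    unfold force Ftilde Gfun
    rw [hs2]
    field_simp
    ring
  have hICinner : ∀ ψ ∈ Ioo (-π) π,
      (∫ φ in Ioo (-(π/2)) (π/2), f (η₀,φ,ψ) * g' (η₀,φ,ψ) (0,1,0) * Real.cos φ ^ 2)
      = ∫ φ in Ioo (-(π/2)) (π/2), f (η₀,φ,ψ)^2 * Real.sin φ * Real.cos φ := by
    intro ψ hψ
    have hψIcc : ψ ∈ Icc (-π) π := Ioo_subset_Icc_self hψ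
    have hππ2 : (-(π/2):ℝ) ≤ π/2 := by linarith
    have hmapφ : MapsTo (fun φ : ℝ => (η₀, φ, ψ)) (Icc (-(π/2)) (π/2)) D := by
      intro φ hφ; simp only [hDdef, milneDomain, mem_prod, mem_Icc]
      exact ⟨⟨hη₀Icc.1, hη₀Icc.2⟩, ⟨hφ.1, hφ.2⟩, hψIcc.1, hψIcc.2⟩
    have hfφ : ContinuousOn (fun φ : ℝ => f (η₀, φ, ψ)) (Icc (-(π/2)) (π/2)) :=
      hfc.comp (continuous_const.prodMk
        (continuous_id.prodMk continuous_const)).continuousOn hmapφ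
    have hgφ : ContinuousOn (fun φ : ℝ => g' (η₀, φ, ψ) (0,1,0)) (Icc (-(π/2)) (π/2)) :=
      (ContinuousLinearMap.apply ℝ ℝ _).continuous.comp_continuousOn
        (hg'c.comp (continuous_const.prodMk
          (continuous_id.prodMk continuous_const)).continuousOn hmapφ)
    have hW1 : ContinuousOn
        (fun φ : ℝ => f (η₀,φ,ψ) * g' (η₀,φ,ψ) (0,1,0) * Real.cos φ ^ 2)
        (Icc (-(π/2)) (π/2)) :=
      (hfφ.mul hgφ).mul ((continuous_cos.pow 2).continuousOn)
    have hW2 : ContinuousOn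
        (fun φ : ℝ => f (η₀,φ,ψ)^2 * Real.sin φ * Real.cos φ) (Icc (-(π/2)) (π/2)) :=
      ((hfφ.pow 2).mul continuous_sin.continuousOn).mul continuous_cos.continuousOn
    have hint1 : IntervalIntegrable
        (fun φ : ℝ => f (η₀,φ,ψ) * g' (η₀,φ,ψ) (0,1,0) * Real.cos φ ^ 2)
        volume (-(π/2)) (π/2) :=
      ContinuousOn.intervalIntegrable (by rwa [uIcc_of_le hππ2])
    have hint2 : IntervalIntegrable
        (fun φ : ℝ => f (η₀,φ,ψ)^2 * Real.sin φ * Real.cos φ) volume (-(π/2)) (π/2) :=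
      ContinuousOn.intervalIntegrable (by rwa [uIcc_of_le hππ2])
    have hw : ∀ x ∈ Ioo (-(π/2)) (π/2),
        HasDerivAt (fun φ => Real.cos φ ^2 * f (η₀,φ,ψ)^2 / 2)
          (f (η₀,x,ψ) * g' (η₀,x,ψ) (0,1,0) * Real.cos x ^2
            - f (η₀,x,ψ)^2 * Real.sin x * Real.cos x) x := by
      intro x hx
      have hp : (η₀, x, ψ) ∈ interior D := by rw [hintD]; exact ⟨hη₀, hx, hψ⟩
      have hu := hPhi η₀ x ψ hp
      have hc2 : HasDerivAt (fun φ : ℝ => Real.cos φ ^ 2)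
          (2 * Real.cos x ^ 1 * (-Real.sin x)) x := (Real.hasDerivAt_cos x).pow 2
      have hf2 : HasDerivAt (fun φ : ℝ => f (η₀,φ,ψ) ^ 2)
          (2 * f (η₀,x,ψ) ^ 1 * g' (η₀,x,ψ) (0,1,0)) x := hu.pow 2
      have hcomb := (hc2.mul hf2).div_const 2
      refine hcomb.congr_deriv ?_
      ring
    have hcw : ContinuousOn (fun φ : ℝ => Real.cos φ ^2 * f (η₀,φ,ψ)^2 / 2)
        (Icc (-(π/2)) (π/2)) :=
      ((continuous_cos.pow 2).continuousOn.mul (hfφ.pow 2)).div_const 2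
    have hFTC := intervalIntegral.integral_eq_sub_of_hasDeriv_right_of_le hππ2 hcw
      (fun x hx => (hw x hx).hasDerivWithinAt) (hint1.sub hint2)
    have hz : (∫ x in (-(π/2))..(π/2),
        (f (η₀,x,ψ) * g' (η₀,x,ψ) (0,1,0) * Real.cos x ^2
          - f (η₀,x,ψ)^2 * Real.sin x * Real.cos x)) = 0 := by
      rw [hFTC]
      simp [Real.cos_pi_div_two, Real.cos_neg]
    rw [intervalIntegral.integral_sub hint1 hint2] at hz
    rw [← integral_Ioc_eq_integral_Ioo, ← integral_Ioc_eq_integral_Ioo,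
        ← intervalIntegral.integral_of_le hππ2, ← intervalIntegral.integral_of_le hππ2]
    linarith [hz]
  have iC2_int : IntegrableOn
      (fun a : ℝ×ℝ => force R₁ R₂ ε η₀ a.1
        * (f (η₀,a.2,a.1)^2 * Real.sin a.2 * Real.cos a.2)) angSq :=
    integrableOn_angSq (hforceC.mul (((hfηc.pow 2).mul hsinc).mul hcosc))
  have hICmid : (∫ a in angSq, force R₁ R₂ ε η₀ a.1
        * (f (η₀,a.2,a.1) * g' (η₀,a.2,a.1) (0,1,0)) * Real.cos a.2 ^ 2)
      = ∫ a in angSq, force R₁ R₂ ε η₀ a.1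
        * (f (η₀,a.2,a.1)^2 * Real.sin a.2 * Real.cos a.2) := by
    rw [iter_ang _ iC_int, iter_ang _ iC2_int]
    apply setIntegral_congr_fun measurableSet_Ioo
    intro ψ hψ
    calc (∫ φ in Ioo (-(π/2)) (π/2), force R₁ R₂ ε η₀ ψ
          * (f (η₀,φ,ψ) * g' (η₀,φ,ψ) (0,1,0)) * Real.cos φ ^ 2)
        = ∫ φ in Ioo (-(π/2)) (π/2), force R₁ R₂ ε η₀ ψ
          * (f (η₀,φ,ψ) * g' (η₀,φ,ψ) (0,1,0) * Real.cos φ ^ 2) := by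
          apply setIntegral_congr_fun measurableSet_Ioo; intro φ _; ring
      _ = force R₁ R₂ ε η₀ ψ * ∫ φ in Ioo (-(π/2)) (π/2),
          f (η₀,φ,ψ) * g' (η₀,φ,ψ) (0,1,0) * Real.cos φ ^ 2 := integral_const_mul _ _
      _ = force R₁ R₂ ε η₀ ψ * ∫ φ in Ioo (-(π/2)) (π/2),
          f (η₀,φ,ψ)^2 * Real.sin φ * Real.cos φ := by rw [hICinner ψ hψ]
      _ = ∫ φ in Ioo (-(π/2)) (π/2), force R₁ R₂ ε η₀ ψ
          * (f (η₀,φ,ψ)^2 * Real.sin φ * Real.cos φ) := (integral_const_mul _ _).symm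
  have hB1int : IntegrableOn
      (fun a : ℝ×ℝ => f (η₀,a.2,a.1) * (f (η₀,a.2,a.1) * Real.sin a.2) * Real.cos a.2)
      angSq := integrableOn_angSq ((hfηc.mul (hfηc.mul hsinc)).mul hcosc)
  have hB2int : IntegrableOn
      (fun a : ℝ×ℝ => (f (η₀,a.2,a.1) * Real.cos a.1 ^ 2)
        * (f (η₀,a.2,a.1) * Real.sin a.2) * Real.cos a.2) angSq :=
    integrableOn_angSq (((hfηc.mul (hcos1.pow 2)).mul (hfηc.mul hsinc)).mul hcosc)
  have hIC : (∫ a in angSq, force R₁ R₂ ε η₀ a.1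
        * (f (η₀,a.2,a.1) * g' (η₀,a.2,a.1) (0,1,0)) * Real.cos a.2 ^ 2)
      = Ftilde R₁ ε η₀ * brkt f (fun p => f p * Real.sin p.2.1) η₀
        + Gfun R₁ R₂ ε η₀ * brkt (fun p => f p * Real.cos p.2.2 ^ 2)
            (fun p => f p * Real.sin p.2.1) η₀ := by
    rw [hICmid]
    have hsplit : (∫ a in angSq, force R₁ R₂ ε η₀ a.1
          * (f (η₀,a.2,a.1)^2 * Real.sin a.2 * Real.cos a.2))
        = ∫ a in angSq,
            (Ftilde R₁ ε η₀
              * (f (η₀,a.2,a.1) * (f (η₀,a.2,a.1) * Real.sin a.2) * Real.cos a.2)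
             + Gfun R₁ R₂ ε η₀
              * ((f (η₀,a.2,a.1) * Real.cos a.1 ^ 2) * (f (η₀,a.2,a.1) * Real.sin a.2)
                  * Real.cos a.2)) := by
      apply setIntegral_congr_fun angSq_meas
      intro a _
      simp only [hforce_split a.1]
      ring
    rw [hsplit, integral_add (hB1int.const_mul _) (hB2int.const_mul _),
        integral_const_mul, integral_const_mul]
    congr 1
    · congr 1
      exact (fubini_ang _ ((hfηc.mul (hfηc.mul hsinc)).mul hcosc)).symm
    · congr 1
      exact (fubini_ang _ (((hfηc.mul (hcos1.pow 2)).mul (hfηc.mul hsinc)).mul hcosc)).symm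
  -- final assembly
  rw [hderiv_eq]
  rw [hIsplit, hIS, hIZ, hIA, hIC]
  ring




/-- identity (mt 02): weighted energy identity. -/
theorem milne_energy_identity (R₁ R₂ n ε : ℝ) (hR₁ : 0 < R₁) (hR₂ : 0 < R₂)
    (hn : n ∈ Ioo (0 : ℝ) (1 / 2)) (hε : ε ∈ Ioo (0 : ℝ) 1)
    (hεn : ε ^ (1 - n) < min R₁ R₂)
    (h : ℝ → ℝ → ℝ) (S f : ℝ × ℝ × ℝ → ℝ)
    (hS : ContinuousOn S (milneDomain (layerL ε n)))
    (hf : IsMilneSolution R₁ R₂ ε n h S f) :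
    ∀ η ∈ Ioo (0 : ℝ) (layerL ε n),
      (1 / 2) * deriv (brkt f (fun p => f p * Real.sin p.2.1)) η
          + Ftilde R₁ ε η * brkt f (fun p => f p * Real.sin p.2.1) η
        = -brkt (fun p => f p - angAvg f p.1) (fun p => f p - angAvg f p.1) η
          - Gfun R₁ R₂ ε η * brkt (fun p => f p * Real.cos p.2.2 ^ 2)
              (fun p => f p * Real.sin p.2.1) η
          + brkt S f η := by
  intro η₀ hη₀
  exact milne_energy_identity_aux R₁ R₂ n ε hR₁ hR₂ hn hε hεn S f hS hf.smooth
    (fun p hp => hf.eqn p hp) η₀ hη₀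

end MilneStmt
end
end
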